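/- arXiv:2106.13135 — 4 statements merged into one kernel-verified Lean document; each statement's English description precedes it below -/
import Mathlib

section
/- Completeness of the weighted space: for any γ > 0, let E_γ be the set of nondecreasing, nonnegative, right-continuous functions f : [0,∞) → [0,∞) with ∫_0^∞ e^{−γ t} f(t) dt < ∞, and define d_γ(f,h) = ∫_0^∞ e^{−γ t} |f(t) − h(t)| dt. Then d_γ is a metric on E_γ and the metric space (E_γ, d_γ) is complete. -/
open MeasureTheory Set Filter
open Topology

/-- Membership in the weighted space `E_γ`: nondecreasing, nonnegative,
right-continuous functions `f : [0,∞) → [0,∞)` (encoded as functions on `ℝ`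
vanishing on `(-∞,0)`) with finite exponentially weighted integral
`∫_0^∞ e^{−γ t} f(t) dt < ∞`. -/
def MemEgamma (γ : ℝ) (f : ℝ → ℝ) : Prop :=
  Monotone f ∧ (∀ t, t < 0 → f t = 0) ∧ (∀ t, 0 ≤ f t) ∧
    (∀ t, 0 ≤ t → ContinuousWithinAt f (Set.Ici t) t) ∧
    IntegrableOn (fun t => Real.exp (-γ * t) * f t) (Set.Ioi 0)

/-- The weighted `L¹` distance `d_γ(f,h) = ∫_0^∞ e^{−γ t} |f(t) − h(t)| dt`. -/
noncomputable def dGamma (γ : ℝ) (f h : ℝ → ℝ) : ℝ :=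
  ∫ t in Set.Ioi (0:ℝ), Real.exp (-γ * t) * |f t - h t|

lemma integ_abs {γ : ℝ} {f g : ℝ → ℝ} (hf : MemEgamma γ f) (hg : MemEgamma γ g) :
    IntegrableOn (fun t => Real.exp (-γ * t) * |f t - g t|) (Set.Ioi 0) := by
  apply Integrable.mono' (hf.2.2.2.2.add hg.2.2.2.2)
  · exact ((Real.measurable_exp.comp (measurable_const.mul measurable_id)).mul
      ((hf.1.measurable.sub hg.1.measurable).abs)).aestronglyMeasurable
  · refine Eventually.of_forall fun t => ?_
    have h1 : |f t - g t| ≤ f t + g t := by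
      have := abs_sub_abs_le_abs_sub (f t) (g t)
      calc |f t - g t| ≤ |f t| + |g t| := abs_sub _ _
        _ = f t + g t := by rw [abs_of_nonneg (hf.2.2.1 t), abs_of_nonneg (hg.2.2.1 t)]
    have h2 : (0:ℝ) ≤ Real.exp (-γ * t) := (Real.exp_pos _).le
    simp only [Pi.add_apply, norm_mul, Real.norm_eq_abs, abs_abs, abs_of_nonneg h2]
    calc Real.exp (-γ*t) * |f t - g t| ≤ Real.exp (-γ*t) * (f t + g t) :=
          mul_le_mul_of_nonneg_left h1 h2
      _ = _ := by ring

lemma eq_of_ae_eq {f g : ℝ → ℝ}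
    (hf0 : ∀ t, t < 0 → f t = 0) (hg0 : ∀ t, t < 0 → g t = 0)
    (hfr : ∀ t, 0 ≤ t → ContinuousWithinAt f (Set.Ici t) t)
    (hgr : ∀ t, 0 ≤ t → ContinuousWithinAt g (Set.Ici t) t)
    (hae : ∀ᵐ x : ℝ, x ∈ Set.Ioi (0:ℝ) → f x = g x) : f = g := by
  have hnull : volume {x : ℝ | ¬ (x ∈ Set.Ioi (0:ℝ) → f x = g x)} = 0 := by
    rwa [← MeasureTheory.ae_iff]
  funext t
  rcases lt_or_ge t 0 with ht | ht
  · rw [hf0 t ht, hg0 t ht]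
  -- pick points sₙ ∈ (t, t + 1/(n+1)) where f = g
  have hex : ∀ n : ℕ, ∃ s : ℝ, t < s ∧ s < t + 1/(n+1) ∧ f s = g s := by
    intro n
    by_contra hcon
    push_neg at hcon
    have hsub : Set.Ioo t (t + 1/(n+1)) ⊆ {x : ℝ | ¬ (x ∈ Set.Ioi (0:ℝ) → f x = g x)} := by
      intro x hx
      have hx0 : 0 < x := lt_of_le_of_lt ht hx.1
      simp only [Set.mem_setOf_eq]
      intro himp
      exact hcon x hx.1 hx.2 (himp hx0)
    have := measure_mono_null hsub hnull
    rw [Real.volume_Ioo] at this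
    have hpos : (0:ℝ) < 1/(n+1) := by positivity
    simp only [add_sub_cancel_left] at this
    rw [ENNReal.ofReal_eq_zero] at this
    linarith
  choose s hs1 hs2 hs3 using hex
  have hst : Tendsto s atTop (𝓝 t) := by
    have h1 : Tendsto (fun n : ℕ => t + 1/(n+1 : ℝ)) atTop (𝓝 (t + 0)) :=
      tendsto_const_nhds.add tendsto_one_div_add_atTop_nhds_zero_nat
    rw [add_zero] at h1
    exact tendsto_of_tendsto_of_tendsto_of_le_of_le tendsto_const_nhds h1
      (fun n => (hs1 n).le) (fun n => (hs2 n).le)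
  have hstw : Tendsto s atTop (𝓝[Set.Ici t] t) :=
    tendsto_nhdsWithin_of_tendsto_nhds_of_eventually_within s hst
      (Eventually.of_forall fun n => (hs1 n).le)
  have hft : Tendsto (fun n => f (s n)) atTop (𝓝 (f t)) := (hfr t ht).tendsto.comp hstw
  have hgt : Tendsto (fun n => g (s n)) atTop (𝓝 (g t)) := (hgr t ht).tendsto.comp hstw
  have : (fun n => f (s n)) = fun n => g (s n) := funext fun n => hs3 n
  rw [this] at hft
  exact tendsto_nhds_unique hft hgt

lemma complete_part (γ : ℝ) (hγ : 0 < γ) (F : ℕ → ℝ → ℝ) (hF : ∀ n, MemEgamma γ (F n))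
    (hC : ∀ ε : ℝ, 0 < ε → ∃ N : ℕ, ∀ m ≥ N, ∀ n ≥ N, dGamma γ (F m) (F n) < ε) :
    ∃ f : ℝ → ℝ, MemEgamma γ f ∧
      Tendsto (fun n => dGamma γ (F n) f) atTop (nhds 0) := by
  set μ : Measure ℝ := volume.restrict (Set.Ioi (0:ℝ)) with hμ
  set u : ℕ → ℝ → ℝ := fun n t => Real.exp (-γ * t) * F n t with hu_def
  have hu : ∀ n, Integrable (u n) μ := fun n => (hF n).2.2.2.2
  set v : ℕ → (ℝ →₁[μ] ℝ) := fun n => (hu n).toL1 (u n) with hv_def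
  -- distances agree
  have hdist : ∀ m n, dist (v m) (v n) = dGamma γ (F m) (F n) := by
    intro m n
    rw [L1.dist_eq_integral_dist]
    refine (integral_congr_ae ?_).symm.trans rfl
    filter_upwards [Integrable.coeFn_toL1 (hu m), Integrable.coeFn_toL1 (hu n)] with x h1 h2
    rw [Real.dist_eq, h1, h2]
    simp only [hu_def, ← mul_sub, abs_mul, abs_of_pos (Real.exp_pos _)]
  have hcauchy : CauchySeq v := by
    rw [Metric.cauchySeq_iff]
    intro ε hε
    obtain ⟨N, hN⟩ := hC ε hε
    exact ⟨N, fun m hm n hn => (hdist m n) ▸ hN m hm n hn⟩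
  obtain ⟨vlim, hvlim⟩ := cauchySeq_tendsto_of_complete hcauchy
  have hmeas : TendstoInMeasure μ (fun n => ⇑(v n)) atTop ⇑vlim :=
    tendstoInMeasure_of_tendsto_Lp hvlim
  obtain ⟨ns, hns_mono, hns_ae⟩ := hmeas.exists_seq_tendsto_ae
  set V : ℝ → ℝ := ⇑vlim with hV_def
  have hVint : Integrable V μ := L1.integrable_coeFn vlim
  have hcoe : ∀ᵐ x ∂μ, ∀ k, (v (ns k)) x = u (ns k) x :=
    ae_all_iff.mpr fun k => Integrable.coeFn_toL1 (hu (ns k))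
  set G : ℝ → ℝ := fun x => Real.exp (γ * x) * V x with hG_def
  have haeF : ∀ᵐ x ∂μ, Tendsto (fun k => F (ns k) x) atTop (𝓝 (G x)) := by
    filter_upwards [hns_ae, hcoe] with x h1 h2
    have h3 : Tendsto (fun k => u (ns k) x) atTop (𝓝 (V x)) := by
      refine h1.congr fun k => h2 k
    have h4 := h3.const_mul (Real.exp (γ * x))
    refine h4.congr fun k => ?_
    simp only [hu_def]
    rw [← mul_assoc, ← Real.exp_add, show γ*x + -γ*x = 0 by ring, Real.exp_zero, one_mul]
  have haeF' : ∀ᵐ x : ℝ, x ∈ Set.Ioi (0:ℝ) → Tendsto (fun k => F (ns k) x) atTop (𝓝 (G x)) :=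
    (ae_restrict_iff' measurableSet_Ioi).mp haeF
  set S : Set ℝ := {x : ℝ | 0 < x ∧ Tendsto (fun k => F (ns k) x) atTop (𝓝 (G x))} with hS_def
  have hSnull : volume {x : ℝ | ¬ (x ∈ Set.Ioi (0:ℝ) →
      Tendsto (fun k => F (ns k) x) atTop (𝓝 (G x)))} = 0 := by
    rwa [← MeasureTheory.ae_iff]
  -- dense existence of points of S
  have hne : ∀ t : ℝ, 0 ≤ t → ∀ δ : ℝ, 0 < δ → ∃ s, s ∈ S ∧ t < s ∧ s < t + δ := by
    intro t ht δ hδ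
    by_contra hcon
    push_neg at hcon
    have hsub : Set.Ioo t (t + δ) ⊆ {x : ℝ | ¬ (x ∈ Set.Ioi (0:ℝ) →
        Tendsto (fun k => F (ns k) x) atTop (𝓝 (G x)))} := by
      intro x hx
      have hx0 : 0 < x := lt_of_le_of_lt ht hx.1
      simp only [Set.mem_setOf_eq]
      intro himp
      exact absurd (hcon x ⟨hx0, himp hx0⟩ hx.1) (not_le.mpr hx.2)
    have h0 := measure_mono_null hsub hSnull
    rw [Real.volume_Ioo, add_sub_cancel_left, ENNReal.ofReal_eq_zero] at h0
    linarith
  have hGmono : ∀ x ∈ S, ∀ y ∈ S, x ≤ y → G x ≤ G y := by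
    intro x hx y hy hxy
    exact le_of_tendsto_of_tendsto' hx.2 hy.2 fun k => (hF (ns k)).1 hxy
  have hGnonneg : ∀ x ∈ S, 0 ≤ G x := fun x hx =>
    ge_of_tendsto' hx.2 fun k => (hF (ns k)).2.2.1 x
  -- the candidate limit
  set f : ℝ → ℝ := fun t => if t < 0 then 0 else sInf (G '' (S ∩ Set.Ioi t)) with hf_def
  have hbdd : ∀ t : ℝ, BddBelow (G '' (S ∩ Set.Ioi t)) := by
    rintro t
    refine ⟨0, ?_⟩
    rintro y ⟨s, hs, rfl⟩
    exact hGnonneg s hs.1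
  have hnonempty : ∀ t : ℝ, 0 ≤ t → (G '' (S ∩ Set.Ioi t)).Nonempty := by
    intro t ht
    obtain ⟨s, hsS, hst, _⟩ := hne t ht 1 one_pos
    exact ⟨G s, s, ⟨hsS, hst⟩, rfl⟩
  have hfeq : ∀ t : ℝ, 0 ≤ t → f t = sInf (G '' (S ∩ Set.Ioi t)) := fun t ht => if_neg (not_lt.mpr ht)
  have hf0 : ∀ t : ℝ, t < 0 → f t = 0 := fun t ht => if_pos ht
  have hfnonneg : ∀ t : ℝ, 0 ≤ f t := by
    intro t
    rcases lt_or_ge t 0 with ht | ht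
    · rw [hf0 t ht]
    · rw [hfeq t ht]
      refine Real.sInf_nonneg ?_
      rintro y ⟨s, hs, rfl⟩
      exact hGnonneg s hs.1
  have hd1 : ∀ t : ℝ, 0 ≤ t → ∀ s ∈ S, t < s → f t ≤ G s := by
    intro t ht s hs hts
    rw [hfeq t ht]
    exact csInf_le (hbdd t) ⟨s, ⟨hs, hts⟩, rfl⟩
  have hd2 : ∀ x ∈ S, G x ≤ f x := by
    intro x hx
    rw [hfeq x hx.1.le]
    refine le_csInf (hnonempty x hx.1.le) ?_
    rintro y ⟨s, ⟨hsS, hsx⟩, rfl⟩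
    exact hGmono x hx s hsS hsx.le
  have hfmono : Monotone f := by
    intro a b hab
    rcases lt_or_ge b 0 with hb | hb
    · rw [hf0 a (lt_of_le_of_lt hab hb), hf0 b hb]
    · rcases lt_or_ge a 0 with ha | ha
      · rw [hf0 a ha]; exact hfnonneg b
      · rw [hfeq a ha, hfeq b hb]
        refine csInf_le_csInf (hbdd a) (hnonempty b hb) ?_
        exact Set.image_mono (f := G) (Set.inter_subset_inter_right S (Set.Ioi_subset_Ioi hab))
  have hfrc : ∀ t : ℝ, 0 ≤ t → ContinuousWithinAt f (Set.Ici t) t := by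
    intro t ht
    rw [Metric.continuousWithinAt_iff]
    intro ε hε
    have hlt : sInf (G '' (S ∩ Set.Ioi t)) < f t + ε := by
      rw [hfeq t ht]; linarith
    obtain ⟨y, ⟨s0, ⟨hs0S, hs0t⟩, rfl⟩, hylt⟩ := exists_lt_of_csInf_lt (hnonempty t ht) hlt
    refine ⟨s0 - t, by linarith [Set.mem_Ioi.mp hs0t], ?_⟩
    intro y hyIci hydist
    have hy1 : t ≤ y := hyIci
    rw [Real.dist_eq, abs_of_nonneg (by linarith)] at hydist
    have hy2 : y < s0 := by linarith
    have hfy_le : f y ≤ G s0 := hd1 y (le_trans ht hy1) s0 hs0S hy2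
    have hfy_ge : f t ≤ f y := hfmono hy1
    rw [Real.dist_eq, abs_of_nonneg (by linarith)]
    linarith
  -- a.e. equality of f and G on (0, ∞)
  have hdisc : volume {x : ℝ | ¬ ContinuousAt f x} = 0 :=
    Set.Countable.measure_zero (hfmono.countable_not_continuousAt) _
  have hfG_ae : ∀ᵐ x ∂μ, f x = G x := by
    rw [hμ, ae_restrict_iff' measurableSet_Ioi]
    rw [ae_iff]
    refine measure_mono_null ?_ (measure_union_null hSnull hdisc)
    intro x hx
    simp only [Set.mem_setOf_eq, Classical.not_imp] at hx
    obtain ⟨hx0, hxne⟩ := hx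
    by_cases hxS : Tendsto (fun k => F (ns k) x) atTop (𝓝 (G x))
    · -- x ∈ S but f x ≠ G x: discontinuity point
      refine Or.inr ?_
      have hxS' : x ∈ S := ⟨hx0, hxS⟩
      have hlt : G x < f x :=
        lt_of_le_of_ne (hd2 x hxS') (fun h => hxne h.symm)
      simp only [Set.mem_setOf_eq]
      intro hc
      have htd : Tendsto f (𝓝[<] x) (𝓝 (f x)) := hc.tendsto.mono_left nhdsWithin_le_nhds
      have hev : ∀ᶠ y in 𝓝[<] x, f y ≤ G x := by
        filter_upwards [Ioo_mem_nhdsLT_of_mem (Set.mem_Ioc.mpr ⟨hx0, le_refl x⟩)] with y hy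
        exact hd1 y hy.1.le x hxS' hy.2
      have := le_of_tendsto htd hev
      linarith
    · refine Or.inl ?_
      simp only [Set.mem_setOf_eq, Classical.not_imp]
      exact ⟨hx0, hxS⟩
  -- the weighted f is a.e. equal to V
  have hVf : (fun t => Real.exp (-γ * t) * f t) =ᵐ[μ] V := by
    filter_upwards [hfG_ae] with x hx
    rw [hx]
    simp only [hG_def]
    rw [← mul_assoc, ← Real.exp_add, show -γ*x + γ*x = 0 by ring, Real.exp_zero, one_mul]
  have hfint : IntegrableOn (fun t => Real.exp (-γ * t) * f t) (Set.Ioi 0) :=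
    hVint.congr hVf.symm
  refine ⟨f, ⟨hfmono, hf0, hfnonneg, hfrc, hfint⟩, ?_⟩
  -- convergence of distances
  have hdist2 : ∀ n, dGamma γ (F n) f = dist (v n) vlim := by
    intro n
    rw [L1.dist_eq_integral_dist]
    refine (integral_congr_ae ?_).trans rfl
    filter_upwards [Integrable.coeFn_toL1 (hu n), hVf] with x h1 h2
    rw [Real.dist_eq, h1, ← hV_def, ← h2]
    simp only [hu_def, ← mul_sub, abs_mul, abs_of_pos (Real.exp_pos _)]
  have htend : Tendsto (fun n => dist (v n) vlim) atTop (𝓝 0) :=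
    tendsto_iff_dist_tendsto_zero.mp hvlim
  exact htend.congr fun n => (hdist2 n).symm

/-- **Completeness of the weighted space `(E_γ, d_γ)`.**
For any `γ > 0`, `d_γ` is a metric on `E_γ` (nonnegative, symmetric, satisfying
the triangle inequality, and vanishing exactly on pairs of equal functions),
and the metric space `(E_γ, d_γ)` is complete: every Cauchy sequence in `E_γ`
converges in the distance `d_γ` to an element of `E_γ`. -/
theorem Egamma_metric_complete (γ : ℝ) (hγ : 0 < γ) :
    (∀ f g, MemEgamma γ f → MemEgamma γ g → 0 ≤ dGamma γ f g) ∧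
    (∀ f g, MemEgamma γ f → MemEgamma γ g → dGamma γ f g = dGamma γ g f) ∧
    (∀ f g h, MemEgamma γ f → MemEgamma γ g → MemEgamma γ h →
      dGamma γ f h ≤ dGamma γ f g + dGamma γ g h) ∧
    (∀ f g, MemEgamma γ f → MemEgamma γ g → (dGamma γ f g = 0 ↔ f = g)) ∧
    (∀ F : ℕ → ℝ → ℝ, (∀ n, MemEgamma γ (F n)) →
      (∀ ε : ℝ, 0 < ε → ∃ N : ℕ, ∀ m ≥ N, ∀ n ≥ N, dGamma γ (F m) (F n) < ε) →
      ∃ f : ℝ → ℝ, MemEgamma γ f ∧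
        Tendsto (fun n => dGamma γ (F n) f) atTop (nhds 0)) := by
  refine ⟨?_, ?_, ?_, ?_, ?_⟩
  · -- nonnegativity
    intro f g _ _
    exact integral_nonneg fun t => mul_nonneg (Real.exp_pos _).le (abs_nonneg _)
  · -- symmetry
    intro f g _ _
    simp only [dGamma, abs_sub_comm]
  · -- triangle inequality
    intro f g h hf hg hh
    have hfg := integ_abs hf hg
    have hgh := integ_abs hg hh
    have hfh := integ_abs hf hh
    calc dGamma γ f h
        ≤ ∫ t in Set.Ioi (0:ℝ),
            (Real.exp (-γ * t) * |f t - g t| + Real.exp (-γ * t) * |g t - h t|) := by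
          refine integral_mono hfh (hfg.add hgh) fun t => ?_
          rw [← mul_add]
          refine mul_le_mul_of_nonneg_left ?_ (Real.exp_pos _).le
          exact abs_sub_le _ _ _
      _ = dGamma γ f g + dGamma γ g h := integral_add hfg hgh
  · -- identity of indiscernibles
    intro f g hf hg
    constructor
    · intro h0
      have hint := integ_abs hf hg
      have hnn : 0 ≤ᵐ[volume.restrict (Set.Ioi (0:ℝ))]
          fun t => Real.exp (-γ * t) * |f t - g t| :=
        Eventually.of_forall fun t => mul_nonneg (Real.exp_pos _).le (abs_nonneg _)
      have hae := (integral_eq_zero_iff_of_nonneg_ae hnn hint).mp h0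
      have hae2 : ∀ᵐ x ∂(volume.restrict (Set.Ioi (0:ℝ))), f x = g x := by
        filter_upwards [hae] with x hx
        have hx' : Real.exp (-γ * x) * |f x - g x| = 0 := hx
        have h2 : |f x - g x| = 0 := by
          rcases mul_eq_zero.mp hx' with h | h
          · exact absurd h (Real.exp_ne_zero _)
          · exact h
        have := abs_eq_zero.mp h2
        linarith
      exact eq_of_ae_eq hf.2.1 hg.2.1 hf.2.2.2.1 hg.2.2.2.1
        ((ae_restrict_iff' measurableSet_Ioi).mp hae2)
    · intro h
      subst h
      simp [dGamma]
  · -- completeness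
    intro F hF hC
    exact complete_part γ hγ F hF hC
end

section
/- Absolute continuity of solutions of the delay equation: if a nondecreasing function B : [0,∞) → [0,∞) satisfies the delay equation (★), then for all t ≥ 0 and u ≥ 0 one has B(t+u) − B(t) ≤ S0 ∫_t^{t+u} c(s) ( ∫_{[0,s]} τ(s−a) B(da) + I0 τ̄(s) ) ds. Consequently B is absolutely continuous on [0,∞), i.e. there exists a nonnegative locally integrable function b with B(t) = ∫_0^t b(s) ds for all t ≥ 0. -/
open MeasureTheory Set Classical
open scoped ENNReal NNReal

/-- The Lebesgue–Stieltjes measure associated to a nondecreasing function `B`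
(with junk value `0` if `B` is not monotone). -/
noncomputable def stieltjesMeasureOf (B : ℝ → ℝ) : Measure ℝ :=
  if h : Monotone B then h.stieltjesFunction.measure else 0

/-- `B` is a nondecreasing, nonnegative solution of the delay equation (★)
(functions on `[0,∞)` encoded as functions on `ℝ` vanishing on `(-∞,0)`):
for `t ≥ 0`,
`B(t) = S0 (1 − exp(−∫_0^t c(s) (∫_{[0,s]} τ(s−a) B(da) + I0 τbar(s)) ds))`
with `S0 = 1 − I0`. -/
def IsDelaySolution (I0 : ℝ) (c τ τbar : ℝ → ℝ) (B : ℝ → ℝ) : Prop :=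
  Monotone B ∧ (∀ t, t < 0 → B t = 0) ∧ (∀ t, 0 ≤ B t) ∧
    ∀ t, 0 ≤ t →
      B t = (1 - I0) *
        (1 - Real.exp (-(∫ s in Set.Ioc (0:ℝ) t,
          c s * ((∫ a in Set.Icc (0:ℝ) s, τ (s - a) ∂(stieltjesMeasureOf B))
            + I0 * τbar s))))

/-- **Absolute continuity of solutions of the delay equation.**
If a nondecreasing `B : [0,∞) → [0,∞)` satisfies the delay equation (★), then
for all `t, u ≥ 0`,
`B(t+u) − B(t) ≤ S0 ∫_t^{t+u} c(s) (∫_{[0,s]} τ(s−a) B(da) + I0 τbar(s)) ds`,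
and consequently `B` is absolutely continuous on `[0,∞)`: there exists a
nonnegative locally integrable `b` with `B(t) = ∫_0^t b(s) ds` for all `t ≥ 0`. -/
theorem delay_solution_absolutely_continuous
    (I0 : ℝ) (hI0 : I0 ∈ Set.Ioo (0:ℝ) 1)
    (c : ℝ → ℝ) (hcm : Measurable c) (hc01 : ∀ t, 0 ≤ t → c t ∈ Set.Icc (0:ℝ) 1)
    (g : ℝ → ℝ) (hgm : Measurable g) (hg0 : ∀ a, 0 ≤ g a)
    (hg1 : ∫ a in Set.Ioi (0:ℝ), g a = 1)
    (τ : ℝ → ℝ) (hτm : Measurable τ) (hτ0 : ∀ a, 0 ≤ τ a)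
    (hτint : IntegrableOn τ (Set.Ioi 0))
    (τbar : ℝ → ℝ) (hτbar : ∀ s, τbar s = ∫ a in Set.Ioi (0:ℝ), g a * τ (a + s))
    (B : ℝ → ℝ) (hB : IsDelaySolution I0 c τ τbar B) :
    (∀ t u : ℝ, 0 ≤ t → 0 ≤ u →
      B (t + u) - B t ≤ (1 - I0) *
        ∫ s in Set.Ioc t (t + u),
          c s * ((∫ a in Set.Icc (0:ℝ) s, τ (s - a) ∂(stieltjesMeasureOf B))
            + I0 * τbar s)) ∧
    ∃ b : ℝ → ℝ, (∀ s, 0 ≤ b s) ∧ (∀ t, 0 ≤ t → IntegrableOn b (Set.Icc 0 t)) ∧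
      ∀ t, 0 ≤ t → B t = ∫ s in Set.Ioc (0:ℝ) t, b s := by
  obtain ⟨hmono, hneg, hnn, heq⟩ := hB
  obtain ⟨hI0pos, hI0lt⟩ := hI0
  have hμeq : stieltjesMeasureOf B = hmono.stieltjesFunction.measure := dif_pos hmono
  set μ : Measure ℝ := stieltjesMeasureOf B with hμdef
  haveI hμloc : IsLocallyFiniteMeasure μ := by rw [hμeq]; infer_instance
  haveI hμsig : SigmaFinite μ := by rw [hμeq]; infer_instance
  set S0 : ℝ := 1 - I0 with hS0def
  have hS0pos : 0 < S0 := by simp only [hS0def]; linarith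
  have hS0le : S0 ≤ 1 := by simp only [hS0def]; linarith
  set h : ℝ → ℝ := fun s => ∫ a in Set.Icc (0:ℝ) s, τ (s - a) ∂μ with hhdef
  set f : ℝ → ℝ := fun s => c s * (h s + I0 * τbar s) with hfdef
  -- basic bounds
  have hBle : ∀ t, B t ≤ S0 := by
    intro t
    rcases le_or_gt 0 t with ht | ht
    · rw [heq t ht]
      have := Real.exp_pos (-(∫ s in Set.Ioc (0:ℝ) t,
          c s * ((∫ a in Set.Icc (0:ℝ) s, τ (s - a) ∂(stieltjesMeasureOf B)) + I0 * τbar s)))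
      nlinarith
    · rw [hneg t ht]; linarith
  have hB0 : B 0 = 0 := by
    have := heq 0 le_rfl
    simpa using this
  have hhnn : ∀ s, 0 ≤ h s := fun s => integral_nonneg fun a => hτ0 _
  have hτbarnn : ∀ s, 0 ≤ τbar s := by
    intro s; rw [hτbar s]
    exact integral_nonneg fun a => mul_nonneg (hg0 _) (hτ0 _)
  have hfnn : ∀ s, 0 ≤ s → 0 ≤ f s := by
    intro s hs
    exact mul_nonneg (hc01 s hs).1
      (add_nonneg (hhnn s) (mul_nonneg hI0pos.le (hτbarnn s)))
  -- measurability
  have hhmeas : Measurable h := by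
    have hsm : StronglyMeasurable fun p : ℝ × ℝ =>
        Set.indicator {q : ℝ × ℝ | q.2 ∈ Set.Icc 0 q.1} (fun q => τ (q.1 - q.2)) p := by
      apply Measurable.stronglyMeasurable
      apply (hτm.comp (measurable_fst.sub measurable_snd)).indicator
      exact (measurableSet_le measurable_const measurable_snd).inter
        (measurableSet_le measurable_snd measurable_fst)
    have := (hsm.integral_prod_right' (ν := μ)).measurable
    have heqfun : h = fun s => ∫ a,
        Set.indicator {q : ℝ × ℝ | q.2 ∈ Set.Icc 0 q.1} (fun q => τ (q.1 - q.2)) (s, a) ∂μ := by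
      funext s
      rw [show h s = ∫ a in Set.Icc (0:ℝ) s, τ (s - a) ∂μ from rfl,
        ← integral_indicator measurableSet_Icc]
      congr 1
    rw [heqfun]
    exact this
  have hτbarmeas : Measurable τbar := by
    have hsm : StronglyMeasurable fun p : ℝ × ℝ => g p.2 * τ (p.2 + p.1) :=
      ((hgm.comp measurable_snd).mul
        (hτm.comp (measurable_snd.add measurable_fst))).stronglyMeasurable
    have := (hsm.integral_prod_right' (ν := volume.restrict (Set.Ioi 0))).measurable
    have heqfun : τbar = fun s => ∫ a in Set.Ioi (0:ℝ), g a * τ (a + s) := funext hτbar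
    rw [heqfun]
    exact this
  have hfmeas : Measurable f := hcm.mul (hhmeas.add (measurable_const.mul hτbarmeas))
  -- measure bound
  have hμIcc : ∀ T : ℝ, μ (Set.Icc 0 T) ≤ 1 := by
    intro T
    have hsub : Set.Icc (0:ℝ) T ⊆ Set.Ioc (-1) (max T 0) := fun x hx =>
      ⟨by linarith [hx.1], le_trans hx.2 (le_max_left T 0)⟩
    calc μ (Set.Icc 0 T) ≤ μ (Set.Ioc (-1) (max T 0)) := measure_mono hsub
      _ = ENNReal.ofReal
          (hmono.stieltjesFunction (max T 0) - hmono.stieltjesFunction (-1)) := by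
          rw [hμeq]; exact hmono.stieltjesFunction.measure_Ioc _ _
      _ ≤ ENNReal.ofReal 1 := by
          apply ENNReal.ofReal_le_ofReal
          have h1 : hmono.stieltjesFunction (max T 0) ≤ B (max T 0 + 1) := by
            rw [hmono.stieltjesFunction_eq]
            exact hmono.rightLim_le (lt_add_one _)
          have h2 : (0:ℝ) ≤ hmono.stieltjesFunction (-1) := by
            rw [hmono.stieltjesFunction_eq]
            exact le_trans (hnn (-2)) (hmono.le_rightLim (by norm_num))
          have h3 := hBle (max T 0 + 1)
          have : S0 ≤ 1 := hS0le
          linarith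
      _ = 1 := ENNReal.ofReal_one
  -- the tail bound R0'
  set R0' : ℝ≥0∞ := ∫⁻ x in Set.Ici (0:ℝ), ENNReal.ofReal (τ x) with hR0def
  have hR0eq : ∫⁻ x in Set.Ioi (0:ℝ), ENNReal.ofReal (τ x) = R0' := by
    rw [hR0def, Measure.restrict_congr_set Ioi_ae_eq_Ici]
  have hR0fin : R0' < ⊤ := by
    rw [← hR0eq]
    have h2 := hτint.2
    rw [hasFiniteIntegral_iff_ofReal (ae_of_all _ fun x => hτ0 x)] at h2
    exact h2
  have hIciInt : ∫⁻ x, (Set.Ici (0:ℝ)).indicator (fun y => ENNReal.ofReal (τ y)) x = R0' := by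
    rw [lintegral_indicator measurableSet_Ici]
  have key1 : ∀ T a : ℝ, 0 ≤ a →
      (∫⁻ s in Set.Ioc (0:ℝ) T, ENNReal.ofReal (τ (a + s))) ≤ R0' := by
    intro T a ha
    rw [← lintegral_indicator measurableSet_Ioc]
    calc ∫⁻ s, (Set.Ioc (0:ℝ) T).indicator (fun s => ENNReal.ofReal (τ (a + s))) s
        ≤ ∫⁻ s, (Set.Ici (0:ℝ)).indicator (fun y => ENNReal.ofReal (τ y)) (a + s) := by
          apply lintegral_mono
          intro s
          by_cases hs : s ∈ Set.Ioc (0:ℝ) T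
          · simp only [Set.indicator_of_mem hs,
              Set.indicator_of_mem (Set.mem_Ici.mpr (add_nonneg ha hs.1.le))]
            exact le_rfl
          · simp only [Set.indicator_of_notMem hs]; exact zero_le
      _ = ∫⁻ x, (Set.Ici (0:ℝ)).indicator (fun y => ENNReal.ofReal (τ y)) x :=
          lintegral_add_left_eq_self _ a
      _ = R0' := hIciInt
  have key2 : ∀ T a : ℝ,
      (∫⁻ s in Set.Ioc (0:ℝ) T,
        (Set.Icc (0:ℝ) s).indicator (fun a' => ENNReal.ofReal (τ (s - a'))) a)
        ≤ (Set.Icc (0:ℝ) T).indicator (fun _ => R0') a := by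
    intro T a
    by_cases ha : a ∈ Set.Icc (0:ℝ) T
    · rw [Set.indicator_of_mem ha, ← lintegral_indicator measurableSet_Ioc]
      calc ∫⁻ s, (Set.Ioc (0:ℝ) T).indicator
            (fun s => (Set.Icc (0:ℝ) s).indicator (fun a' => ENNReal.ofReal (τ (s - a'))) a) s
          ≤ ∫⁻ s, (Set.Ici (0:ℝ)).indicator (fun y => ENNReal.ofReal (τ y)) (-a + s) := by
            apply lintegral_mono
            intro s
            by_cases hs : s ∈ Set.Ioc (0:ℝ) T
            · simp only [Set.indicator_of_mem hs]
              by_cases ha2 : a ∈ Set.Icc (0:ℝ) s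
              · simp only [Set.indicator_of_mem ha2,
                  Set.indicator_of_mem (Set.mem_Ici.mpr (by linarith [ha2.2] : (0:ℝ) ≤ -a + s))]
                rw [neg_add_eq_sub]
              · simp only [Set.indicator_of_notMem ha2]; exact zero_le
            · simp only [Set.indicator_of_notMem hs]; exact zero_le
        _ = ∫⁻ x, (Set.Ici (0:ℝ)).indicator (fun y => ENNReal.ofReal (τ y)) x :=
            lintegral_add_left_eq_self _ (-a)
        _ = R0' := hIciInt
    · rw [Set.indicator_of_notMem ha]
      have hz : ∀ s ∈ Set.Ioc (0:ℝ) T,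
          (Set.Icc (0:ℝ) s).indicator (fun a' => ENNReal.ofReal (τ (s - a'))) a = 0 := by
        intro s hs
        rw [Set.indicator_of_notMem]
        intro hmem
        exact ha ⟨hmem.1, le_trans hmem.2 hs.2⟩
      rw [setLIntegral_congr_fun measurableSet_Ioc hz]
      simp
  -- comparing Bochner integrals with lintegrals
  have hofτbar : ∀ s : ℝ, ENNReal.ofReal (τbar s)
      ≤ ∫⁻ a in Set.Ioi (0:ℝ), ENNReal.ofReal (g a * τ (a + s)) := by
    intro s
    rw [hτbar s]
    by_cases hi : Integrable (fun a => g a * τ (a + s)) (volume.restrict (Set.Ioi 0))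
    · rw [ofReal_integral_eq_lintegral_ofReal hi
        (ae_of_all _ fun a => mul_nonneg (hg0 a) (hτ0 _))]
    · rw [integral_undef hi]; simp
  have hofh : ∀ s : ℝ, ENNReal.ofReal (h s)
      ≤ ∫⁻ a in Set.Icc (0:ℝ) s, ENNReal.ofReal (τ (s - a)) ∂μ := by
    intro s
    rw [show h s = ∫ a in Set.Icc (0:ℝ) s, τ (s - a) ∂μ from rfl]
    by_cases hi : Integrable (fun a => τ (s - a)) (μ.restrict (Set.Icc 0 s))
    · rw [ofReal_integral_eq_lintegral_ofReal hi (ae_of_all _ fun a => hτ0 _)]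
    · rw [integral_undef hi]; simp
  have hgint : IntegrableOn g (Set.Ioi 0) := by
    by_contra hgi
    rw [integral_undef hgi] at hg1
    norm_num at hg1
  have hglint : ∫⁻ a in Set.Ioi (0:ℝ), ENNReal.ofReal (g a) = 1 := by
    rw [← ofReal_integral_eq_lintegral_ofReal hgint (ae_of_all _ fun a => hg0 a), hg1,
      ENNReal.ofReal_one]
  -- integrability of f on bounded intervals
  have hfint : ∀ T : ℝ, IntegrableOn f (Set.Ioc 0 T) := by
    intro T
    have boundB : (∫⁻ s in Set.Ioc (0:ℝ) T, ENNReal.ofReal (τbar s)) ≤ R0' := by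
      have hswap : (∫⁻ s in Set.Ioc (0:ℝ) T,
            ∫⁻ a in Set.Ioi (0:ℝ), ENNReal.ofReal (g a * τ (a + s)))
          = ∫⁻ a in Set.Ioi (0:ℝ),
            ∫⁻ s in Set.Ioc (0:ℝ) T, ENNReal.ofReal (g a * τ (a + s)) := by
        apply lintegral_lintegral_swap
        exact (((hgm.comp measurable_snd).mul
          (hτm.comp (measurable_snd.add measurable_fst))).ennreal_ofReal).aemeasurable
      calc (∫⁻ s in Set.Ioc (0:ℝ) T, ENNReal.ofReal (τbar s))
          ≤ ∫⁻ s in Set.Ioc (0:ℝ) T,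
              ∫⁻ a in Set.Ioi (0:ℝ), ENNReal.ofReal (g a * τ (a + s)) :=
            lintegral_mono fun s => hofτbar s
        _ = ∫⁻ a in Set.Ioi (0:ℝ),
              ∫⁻ s in Set.Ioc (0:ℝ) T, ENNReal.ofReal (g a * τ (a + s)) := hswap
        _ = ∫⁻ a in Set.Ioi (0:ℝ),
              ENNReal.ofReal (g a) * ∫⁻ s in Set.Ioc (0:ℝ) T, ENNReal.ofReal (τ (a + s)) := by
            apply lintegral_congr fun a => ?_
            have hm : Measurable fun s : ℝ => ENNReal.ofReal (τ (a + s)) := by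
              apply Measurable.ennreal_ofReal
              exact hτm.comp (measurable_const.add measurable_id)
            rw [← lintegral_const_mul _ hm]
            exact lintegral_congr fun s => by rw [ENNReal.ofReal_mul (hg0 a)]
        _ ≤ ∫⁻ a in Set.Ioi (0:ℝ), ENNReal.ofReal (g a) * R0' := by
            apply setLIntegral_mono' measurableSet_Ioi
            intro a ha
            exact mul_le_mul_right (key1 T a ha.out.le) _
        _ = (∫⁻ a in Set.Ioi (0:ℝ), ENNReal.ofReal (g a)) * R0' :=
            lintegral_mul_const _ hgm.ennreal_ofReal
        _ = R0' := by rw [hglint, one_mul]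
    have boundA : (∫⁻ s in Set.Ioc (0:ℝ) T, ENNReal.ofReal (h s)) ≤ R0' := by
      have hmeasInd : Measurable fun p : ℝ × ℝ =>
          Set.indicator {q : ℝ × ℝ | q.2 ∈ Set.Icc 0 q.1}
            (fun q => ENNReal.ofReal (τ (q.1 - q.2))) p :=
        Measurable.indicator ((hτm.comp (measurable_fst.sub measurable_snd)).ennreal_ofReal)
          ((measurableSet_le measurable_const measurable_snd).inter
            (measurableSet_le measurable_snd measurable_fst))
      have hmeasInd' : Measurable fun p : ℝ × ℝ =>
          (Set.Icc (0:ℝ) p.1).indicator (fun a' => ENNReal.ofReal (τ (p.1 - a'))) p.2 := by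
        have heqp : (fun p : ℝ × ℝ =>
            (Set.Icc (0:ℝ) p.1).indicator (fun a' => ENNReal.ofReal (τ (p.1 - a'))) p.2)
            = fun p : ℝ × ℝ => Set.indicator {q : ℝ × ℝ | q.2 ∈ Set.Icc 0 q.1}
              (fun q => ENNReal.ofReal (τ (q.1 - q.2))) p := by
          funext p
          simp only [Set.indicator_apply, Set.mem_setOf_eq]
        rw [heqp]
        exact hmeasInd
      have hswap2 : (∫⁻ s in Set.Ioc (0:ℝ) T,
            ∫⁻ a, (Set.Icc (0:ℝ) s).indicator (fun a' => ENNReal.ofReal (τ (s - a'))) a ∂μ)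
          = ∫⁻ a, (∫⁻ s in Set.Ioc (0:ℝ) T,
              (Set.Icc (0:ℝ) s).indicator (fun a' => ENNReal.ofReal (τ (s - a'))) a) ∂μ :=
        lintegral_lintegral_swap (f := fun s a =>
          (Set.Icc (0:ℝ) s).indicator (fun a' => ENNReal.ofReal (τ (s - a'))) a)
          hmeasInd'.aemeasurable
      calc (∫⁻ s in Set.Ioc (0:ℝ) T, ENNReal.ofReal (h s))
          ≤ ∫⁻ s in Set.Ioc (0:ℝ) T, ∫⁻ a in Set.Icc (0:ℝ) s, ENNReal.ofReal (τ (s - a)) ∂μ :=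
            lintegral_mono fun s => hofh s
        _ = ∫⁻ s in Set.Ioc (0:ℝ) T,
              ∫⁻ a, (Set.Icc (0:ℝ) s).indicator (fun a' => ENNReal.ofReal (τ (s - a'))) a ∂μ :=
            lintegral_congr fun s => (lintegral_indicator measurableSet_Icc _).symm
        _ = ∫⁻ a, (∫⁻ s in Set.Ioc (0:ℝ) T,
              (Set.Icc (0:ℝ) s).indicator (fun a' => ENNReal.ofReal (τ (s - a'))) a) ∂μ := hswap2
        _ ≤ ∫⁻ a, (Set.Icc (0:ℝ) T).indicator (fun _ => R0') a ∂μ :=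
            lintegral_mono fun a => key2 T a
        _ = R0' * μ (Set.Icc 0 T) := lintegral_indicator_const measurableSet_Icc _
        _ ≤ R0' * 1 := mul_le_mul_right (hμIcc T) _
        _ = R0' := mul_one _
    have hnnae : 0 ≤ᵐ[volume.restrict (Set.Ioc (0:ℝ) T)] f :=
      (ae_restrict_iff' measurableSet_Ioc).mpr (ae_of_all _ fun s hs => hfnn s hs.1.le)
    refine ⟨hfmeas.aestronglyMeasurable, ?_⟩
    rw [hasFiniteIntegral_iff_ofReal hnnae]
    have hptw : ∀ s ∈ Set.Ioc (0:ℝ) T,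
        ENNReal.ofReal (f s) ≤ ENNReal.ofReal (h s) + ENNReal.ofReal (τbar s) := by
      intro s hs
      have hc := hc01 s hs.1.le
      have hh1 := hhnn s
      have ht1 := hτbarnn s
      have h1 : f s ≤ h s + τbar s := by
        have hfle : f s ≤ h s + I0 * τbar s := by
          rw [show f s = c s * (h s + I0 * τbar s) from rfl]
          nlinarith [hc.1, hc.2, mul_nonneg hI0pos.le ht1]
        nlinarith
      calc ENNReal.ofReal (f s) ≤ ENNReal.ofReal (h s + τbar s) := ENNReal.ofReal_le_ofReal h1
        _ = ENNReal.ofReal (h s) + ENNReal.ofReal (τbar s) :=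
          ENNReal.ofReal_add (hhnn s) (hτbarnn s)
    calc ∫⁻ s in Set.Ioc (0:ℝ) T, ENNReal.ofReal (f s)
        ≤ ∫⁻ s in Set.Ioc (0:ℝ) T, (ENNReal.ofReal (h s) + ENNReal.ofReal (τbar s)) :=
          setLIntegral_mono' measurableSet_Ioc hptw
      _ = (∫⁻ s in Set.Ioc (0:ℝ) T, ENNReal.ofReal (h s))
          + ∫⁻ s in Set.Ioc (0:ℝ) T, ENNReal.ofReal (τbar s) :=
          lintegral_add_left (hhmeas.ennreal_ofReal) _
      _ < ⊤ := ENNReal.add_lt_top.mpr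
          ⟨lt_of_le_of_lt boundA hR0fin, lt_of_le_of_lt boundB hR0fin⟩
  -- the primitive
  set f' : ℝ → ℝ := (Set.Ioi (0:ℝ)).indicator f with hf'def
  have hf'nn : ∀ s, 0 ≤ f' s := by
    intro s
    by_cases hs : s ∈ Set.Ioi (0:ℝ)
    · rw [hf'def, Set.indicator_of_mem hs]; exact hfnn s hs.le
    · rw [hf'def, Set.indicator_of_notMem hs]
  have hf'meas : Measurable f' := hfmeas.indicator measurableSet_Ioi
  have hf'sub : ∀ u v : ℝ, IntegrableOn f' (Set.Ioc u v) := by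
    intro u v
    rw [hf'def, IntegrableOn, integrable_indicator_iff measurableSet_Ioi, IntegrableOn,
      Measure.restrict_restrict measurableSet_Ioi]
    exact (hfint v).mono_set fun x hx => ⟨hx.1, hx.2.2⟩
  have hf'int : ∀ a b : ℝ, IntervalIntegrable f' volume a b := by
    intro a b
    rw [intervalIntegrable_iff]
    exact hf'sub _ _
  -- the primitive F
  set F : ℝ → ℝ := fun t => ∫ x in (0:ℝ)..t, f' x with hFdef
  have hFcont : Continuous F := intervalIntegral.continuous_primitive hf'int 0
  have hFadd : ∀ a b : ℝ, F a + ∫ x in a..b, f' x = F b := by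
    intro a b
    exact intervalIntegral.integral_add_adjacent_intervals (hf'int 0 a) (hf'int a b)
  have hFdiff : ∀ a b : ℝ, a ≤ b → (∫ s in Set.Ioc a b, f' s) = F b - F a := by
    intro a b hab
    rw [← intervalIntegral.integral_of_le hab]
    have := hFadd a b
    linarith
  have hFmono : Monotone F := by
    intro x y hxy
    have h1 := hFdiff x y hxy
    have h2 : (0:ℝ) ≤ ∫ s in Set.Ioc x y, f' s :=
      setIntegral_nonneg measurableSet_Ioc fun s _ => hf'nn s
    linarith
  have hFneg : ∀ t : ℝ, t ≤ 0 → F t = 0 := by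
    intro t ht
    have h0 : (∫ s in Set.Ioc t 0, f' s) = 0 := by
      rw [show (∫ s in Set.Ioc t 0, f' s) = ∫ s in Set.Ioc t 0, (0:ℝ) from
        setIntegral_congr_fun measurableSet_Ioc fun s hs => by
          rw [hf'def, Set.indicator_of_notMem
            (by simp only [Set.mem_Ioi, not_lt]; exact hs.2 : s ∉ Set.Ioi (0:ℝ))]]
      simp
    have h1 := hFdiff t 0 ht
    rw [h0] at h1
    have h2 : F 0 = 0 := by
      rw [hFdef]
      exact intervalIntegral.integral_same
    linarith
  have hFnn : ∀ t : ℝ, 0 ≤ F t := by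
    intro t
    rcases le_total t 0 with ht | ht
    · exact le_of_eq (hFneg t ht).symm
    · rw [← hFneg 0 le_rfl]
      exact hFmono ht
  have hff' : ∀ a b : ℝ, 0 ≤ a → (∫ s in Set.Ioc a b, f s) = ∫ s in Set.Ioc a b, f' s := by
    intro a b ha
    refine (setIntegral_congr_fun measurableSet_Ioc fun s hs => ?_).symm
    rw [hf'def, Set.indicator_of_mem (Set.mem_Ioi.mpr (lt_of_le_of_lt ha hs.1))]
  have hBF : ∀ t : ℝ, B t = S0 * (1 - Real.exp (-F t)) := by
    intro t
    rcases le_or_gt 0 t with ht | ht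
    · rw [heq t ht]
      congr 3
      rw [hff' 0 t le_rfl, hFdiff 0 t ht, hFneg 0 le_rfl, sub_zero]
    · rw [hneg t ht, hFneg t ht.le]
      simp
  -- the key inequality
  have hexpkey : ∀ x y : ℝ, 0 ≤ x → x ≤ y →
      Real.exp (-x) - Real.exp (-y) ≤ y - x := by
    intro x y hx hxy
    have hmul : Real.exp (-y) = Real.exp (-x) * Real.exp (-(y - x)) := by
      rw [← Real.exp_add]; ring_nf
    have e1 := Real.add_one_le_exp (-(y - x))
    have e2 : Real.exp (-x) ≤ 1 := Real.exp_le_one_iff.mpr (by linarith)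
    have e3 := Real.exp_pos (-x)
    nlinarith
  have hkey : ∀ a b : ℝ, 0 ≤ a → a ≤ b →
      B b - B a ≤ S0 * ∫ s in Set.Ioc a b, f s := by
    intro a b ha hab
    rw [hBF a, hBF b, hff' a b ha, hFdiff a b hab]
    have h1 := hexpkey (F a) (F b) (hFnn a) (hFmono hab)
    nlinarith [hS0pos.le]
  constructor
  · intro t u ht hu
    exact hkey t (t + u) ht (by linarith)
  -- part 2: absolute continuity
  have hBcont : Continuous B := by
    rw [funext hBF]
    exact continuous_const.mul
      (continuous_const.sub (Real.continuous_exp.comp hFcont.neg))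
  set C : ℝ → ℝ := fun t => S0 * F t - B t with hCdef
  have hCcont : Continuous C := (continuous_const.mul hFcont).sub hBcont
  have hC0 : ∀ t : ℝ, t ≤ 0 → C t = 0 := by
    intro t ht
    rw [show C t = S0 * F t - B t from rfl, hFneg t ht]
    rcases lt_or_eq_of_le ht with ht' | ht'
    · rw [hneg t ht']; ring
    · rw [ht', hB0]; ring
  have hCmono : Monotone C := by
    intro x y hxy
    rcases le_or_gt 0 x with hx | hx
    · have h1 := hkey x y hx hxy
      rw [hff' x y hx, hFdiff x y hxy] at h1
      show S0 * F x - B x ≤ S0 * F y - B y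
      linarith
    · rw [hC0 x hx.le]
      rcases le_or_gt 0 y with hy | hy
      · have h1 := hkey 0 y le_rfl hy
        rw [hff' 0 y le_rfl, hFdiff 0 y hy, hFneg 0 le_rfl, hB0, sub_zero, sub_zero] at h1
        show (0:ℝ) ≤ S0 * F y - B y
        linarith
      · rw [hC0 y hy.le]
  -- Stieltjes measures
  have hsfB : ∀ x, hmono.stieltjesFunction x = B x := by
    intro x
    rw [hmono.stieltjesFunction_eq]
    exact rightLim_eq_of_tendsto (hBcont.continuousAt.tendsto.mono_left nhdsWithin_le_nhds)
  have hsfC : ∀ x, hCmono.stieltjesFunction x = C x := by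
    intro x
    rw [hCmono.stieltjesFunction_eq]
    exact rightLim_eq_of_tendsto (hCcont.continuousAt.tendsto.mono_left nhdsWithin_le_nhds)
  have hμBIoc : ∀ a b : ℝ, μ (Set.Ioc a b) = ENNReal.ofReal (B b - B a) := by
    intro a b
    rw [hμeq, StieltjesFunction.measure_Ioc, hsfB, hsfB]
  have hμCIoc : ∀ a b : ℝ,
      hCmono.stieltjesFunction.measure (Set.Ioc a b) = ENNReal.ofReal (C b - C a) := by
    intro a b
    rw [StieltjesFunction.measure_Ioc, hsfC, hsfC]
  set ν : Measure ℝ := volume.withDensity (fun s => ENNReal.ofReal (S0 * f' s)) with hνdef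
  have hνIoc : ∀ a b : ℝ, a ≤ b → ν (Set.Ioc a b) = ENNReal.ofReal (S0 * (F b - F a)) := by
    intro a b hab
    rw [hνdef, withDensity_apply _ measurableSet_Ioc,
      ← ofReal_integral_eq_lintegral_ofReal ((hf'sub a b).const_mul S0)
        (ae_of_all _ fun s => mul_nonneg hS0pos.le (hf'nn s))]
    congr 1
    rw [integral_const_mul, hFdiff a b hab]
  haveI hsumfin : IsLocallyFiniteMeasure (μ + hCmono.stieltjesFunction.measure) := by
    constructor
    intro x
    obtain ⟨s, hsx, hs⟩ := μ.finiteAt_nhds x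
    obtain ⟨t, htx, ht⟩ := (hCmono.stieltjesFunction.measure).finiteAt_nhds x
    refine ⟨s ∩ t, Filter.inter_mem hsx htx, ?_⟩
    rw [Measure.add_apply]
    exact ENNReal.add_lt_top.mpr
      ⟨lt_of_le_of_lt (measure_mono Set.inter_subset_left) hs,
        lt_of_le_of_lt (measure_mono Set.inter_subset_right) ht⟩
  have hext : μ + hCmono.stieltjesFunction.measure = ν := by
    refine Measure.ext_of_Ioc _ _ (fun a b hab => ?_)
    rw [Measure.add_apply, hμBIoc a b, hμCIoc a b, hνIoc a b hab.le,
      ← ENNReal.ofReal_add (by linarith [hmono hab.le] : (0:ℝ) ≤ B b - B a)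
        (by linarith [hCmono hab.le] : (0:ℝ) ≤ C b - C a)]
    congr 1
    show B b - B a + (S0 * F b - B b - (S0 * F a - B a)) = S0 * (F b - F a)
    ring
  have hμle : μ ≤ ν := by
    rw [← hext]
    exact Measure.le_add_right le_rfl
  have hac : μ ≪ volume :=
    (Measure.absolutelyContinuous_of_le hμle).trans (withDensity_absolutelyContinuous _ _)
  have hrn : volume.withDensity (μ.rnDeriv volume) = μ :=
    Measure.withDensity_rnDeriv_eq _ _ hac
  refine ⟨fun s => (μ.rnDeriv volume s).toReal, fun s => ENNReal.toReal_nonneg, ?_, ?_⟩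
  · intro t ht
    refine ⟨(Measure.measurable_rnDeriv μ volume).ennreal_toReal.aestronglyMeasurable, ?_⟩
    rw [hasFiniteIntegral_iff_ofReal (ae_of_all _ fun s => ENNReal.toReal_nonneg)]
    calc ∫⁻ s in Set.Icc (0:ℝ) t, ENNReal.ofReal ((μ.rnDeriv volume s).toReal)
        ≤ ∫⁻ s in Set.Icc (0:ℝ) t, μ.rnDeriv volume s :=
          lintegral_mono fun s => ENNReal.ofReal_toReal_le
      _ = μ (Set.Icc 0 t) := by rw [← withDensity_apply _ measurableSet_Icc, hrn]
      _ ≤ 1 := hμIcc t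
      _ < ⊤ := ENNReal.one_lt_top
  · intro t ht
    have h2 : (∫ s in Set.Ioc (0:ℝ) t, (μ.rnDeriv volume s).toReal)
        = (∫⁻ s in Set.Ioc (0:ℝ) t, μ.rnDeriv volume s).toReal := by
      apply integral_toReal
      · exact (Measure.measurable_rnDeriv μ volume).aemeasurable
      · exact ae_restrict_of_ae (Measure.rnDeriv_lt_top μ volume)
    rw [h2, ← withDensity_apply _ measurableSet_Ioc, hrn, hμBIoc 0 t, hB0, sub_zero,
      ENNReal.toReal_ofReal (hnn t)]
end

section
/- Renewal equation for the infection density: let B be a nondecreasing solution of the delay equation (★), write B(t) = ∫_0^t b(s) ds for its density b and set S(t) = S0 − B(t). Then for Lebesgue-almost every t ≥ 0, b(t) = c(t) S(t) ( ∫_0^t b(a) τ(t−a) da + I0 τ̄(t) ); equivalently, extending b to the negative half-line by b(−u) := I0 g(u) for u > 0, one has b(t) = c(t) S(t) ∫_{−∞}^t b(a) τ(t−a) da for almost every t ≥ 0. -/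
open MeasureTheory Set Classical

open Filter Topology Function
open scoped NNReal ENNReal

namespace RenewalAux


lemma ofReal_integral_le {u : ℝ → ℝ} (ν : Measure ℝ) (h0 : 0 ≤ᵐ[ν] u) :
    ENNReal.ofReal (∫ x, u x ∂ν) ≤ ∫⁻ x, ENNReal.ofReal (u x) ∂ν := by
  by_cases hu : Integrable u ν
  · rw [ofReal_integral_eq_lintegral_ofReal hu h0]
  · rw [integral_undef hu]; simp

variable {h H : ℝ → ℝ}

lemma aux_mono (h0 : ∀ x, 0 < x → 0 ≤ h x) (hint : ∀ T : ℝ, IntegrableOn h (Ioc 0 T))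
    (hH0 : ∀ t, t ≤ 0 → H t = 0) (hHt : ∀ t, 0 ≤ t → H t = ∫ s in Ioc 0 t, h s) :
    Monotone H := by
  intro x y hxy
  rcases le_or_gt y 0 with hy | hy
  · rw [hH0 x (hxy.trans hy), hH0 y hy]
  rcases le_or_gt x 0 with hx | hx
  · rw [hH0 x hx, hHt y hy.le]
    exact setIntegral_nonneg measurableSet_Ioc fun s hs => h0 s hs.1
  · rw [hHt x hx.le, hHt y hy.le]
    have hsplit : Ioc (0:ℝ) y = Ioc 0 x ∪ Ioc x y := (Ioc_union_Ioc_eq_Ioc hx.le hxy).symm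
    have h2 : IntegrableOn h (Ioc x y) := (hint y).mono_set (Ioc_subset_Ioc hx.le le_rfl)
    rw [hsplit, setIntegral_union (Ioc_disjoint_Ioc_of_le le_rfl) measurableSet_Ioc
      (hint x) h2]
    have : 0 ≤ ∫ s in Ioc x y, h s :=
      setIntegral_nonneg measurableSet_Ioc fun s hs => h0 s (hx.trans hs.1)
    linarith

lemma aux_rightLim (hint : ∀ T : ℝ, IntegrableOn h (Ioc 0 T))
    (hH0 : ∀ t, t ≤ 0 → H t = 0) (hHt : ∀ t, 0 ≤ t → H t = ∫ s in Ioc 0 t, h s)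
    (x : ℝ) : Function.rightLim H x = H x := by
  rcases lt_or_ge x 0 with hx | hx
  · apply rightLim_eq_of_tendsto
    rw [hH0 x hx.le]
    have hev : ∀ᶠ y in 𝓝[>] x, (0:ℝ) = H y := by
      filter_upwards [Ioo_mem_nhdsGT_of_mem ⟨le_rfl, hx⟩] with y hy
      exact (hH0 y hy.2.le).symm
    exact tendsto_const_nhds.congr' hev
  · apply rightLim_eq_of_tendsto
    have hint' : IntegrableOn h (Icc 0 (x+1)) :=
      (integrableOn_Icc_iff_integrableOn_Ioc).2 (hint (x+1))
    have hc : ContinuousWithinAt (fun u => ∫ s in Ioc (0:ℝ) u, h s) (Icc 0 (x+1)) x :=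
      intervalIntegral.continuousOn_primitive hint' x ⟨hx, by linarith⟩
    have hc' : ContinuousWithinAt H (Icc 0 (x+1)) x :=
      hc.congr (fun y hy => hHt y hy.1) (hHt x hx)
    have hle : 𝓝[>] x ≤ 𝓝[Icc 0 (x+1)] x := by
      rw [← nhdsWithin_Ioc_eq_nhdsGT (show x < x+1 by linarith)]
      exact nhdsWithin_mono _ fun y hy => ⟨hx.trans hy.1.le, hy.2⟩
    exact hc'.tendsto.mono_left hle

lemma aux_measure (hm : Measurable h) (h0 : ∀ x, 0 < x → 0 ≤ h x)
    (hint : ∀ T : ℝ, IntegrableOn h (Ioc 0 T))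
    (hH0 : ∀ t, t ≤ 0 → H t = 0) (hHt : ∀ t, 0 ≤ t → H t = ∫ s in Ioc 0 t, h s)
    (hmono : Monotone H) :
    hmono.stieltjesFunction.measure
      = volume.withDensity ((Ioi (0:ℝ)).indicator fun x => ENNReal.ofReal (h x)) := by
  have hval : ∀ x, hmono.stieltjesFunction x = H x := fun x => by
    rw [hmono.stieltjesFunction_eq, aux_rightLim hint hH0 hHt x]
  refine Measure.ext_of_Ioc' _ _ (fun a b hab => ?_) (fun a b hab => ?_)
  · rw [StieltjesFunction.measure_Ioc]; exact ENNReal.ofReal_ne_top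
  · rw [StieltjesFunction.measure_Ioc, hval, hval,
      withDensity_apply _ measurableSet_Ioc, lintegral_indicator measurableSet_Ioi,
      Measure.restrict_restrict measurableSet_Ioi]
    rcases le_or_gt b 0 with hb | hb
    · have hset : Ioi (0:ℝ) ∩ Ioc a b = ∅ := by
        ext x; simp only [mem_inter_iff, mem_Ioi, mem_Ioc, mem_empty_iff_false, iff_false]
        rintro ⟨h1, _, h3⟩; linarith
      rw [hH0 b hb, hH0 a (hab.le.trans hb), hset]
      simp
    rcases le_or_gt 0 a with ha | ha
    · have hset : Ioi (0:ℝ) ∩ Ioc a b = Ioc a b := by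
        apply inter_eq_self_of_subset_right
        intro x hx; exact mem_Ioi.2 (lt_of_le_of_lt ha hx.1)
      have hsplit : Ioc (0:ℝ) b = Ioc 0 a ∪ Ioc a b := (Ioc_union_Ioc_eq_Ioc ha hab.le).symm
      have h2 : IntegrableOn h (Ioc a b) := (hint b).mono_set (Ioc_subset_Ioc ha le_rfl)
      have hsum : H b = H a + ∫ s in Ioc a b, h s := by
        rw [hHt b (ha.trans hab.le), hHt a ha, hsplit,
          setIntegral_union (Ioc_disjoint_Ioc_of_le le_rfl) measurableSet_Ioc (hint a) h2]
      rw [hset, hsum]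
      have hnn : 0 ≤ᵐ[volume.restrict (Ioc a b)] h :=
        (ae_restrict_iff' measurableSet_Ioc).2 (Eventually.of_forall fun s hs =>
          h0 s (lt_of_le_of_lt ha hs.1))
      rw [add_sub_cancel_left, ofReal_integral_eq_lintegral_ofReal h2 hnn]
    · have hset : Ioi (0:ℝ) ∩ Ioc a b = Ioc 0 b := by
        ext x
        simp only [mem_inter_iff, mem_Ioi, mem_Ioc]
        constructor
        · rintro ⟨h1, _, h3⟩; exact ⟨h1, h3⟩
        · rintro ⟨h1, h2⟩; exact ⟨h1, ha.trans h1, h2⟩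
      have hnn : 0 ≤ᵐ[volume.restrict (Ioc (0:ℝ) b)] h :=
        (ae_restrict_iff' measurableSet_Ioc).2 (Eventually.of_forall fun s hs => h0 s hs.1)
      rw [hset, hH0 a ha.le, hHt b hb.le, sub_zero,
        ofReal_integral_eq_lintegral_ofReal (hint b) hnn]

lemma aux_deriv (hm : Measurable h) (h0 : ∀ x, 0 < x → 0 ≤ h x)
    (hint : ∀ T : ℝ, IntegrableOn h (Ioc 0 T))
    (hH0 : ∀ t, t ≤ 0 → H t = 0) (hHt : ∀ t, 0 ≤ t → H t = ∫ s in Ioc 0 t, h s) :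
    ∀ᵐ x, 0 < x → HasDerivAt H (h x) x := by
  have hmono := aux_mono h0 hint hH0 hHt
  have hmeas := aux_measure hm h0 hint hH0 hHt hmono
  have h1 := hmono.ae_hasDerivAt
  have h2 : hmono.stieltjesFunction.measure.rnDeriv volume
      =ᵐ[volume] (Ioi (0:ℝ)).indicator fun x => ENNReal.ofReal (h x) := by
    rw [hmeas]
    exact Measure.rnDeriv_withDensity volume ((hm.ennreal_ofReal).indicator measurableSet_Ioi)
  filter_upwards [h1, h2] with x hx hx2 hxpos
  rw [hx2] at hx
  rwa [indicator_of_mem (mem_Ioi.2 hxpos), ENNReal.toReal_ofReal (h0 x hxpos)] at hx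

end RenewalAux

/-- **Renewal equation for the infection density.**
Let `B` be a nondecreasing solution of the delay equation (★) with density
`b` (so `B(t) = ∫_0^t b(s) ds`), and set `S(t) = S0 − B(t)`. Then for
Lebesgue-a.e. `t ≥ 0`,
`b(t) = c(t) S(t) (∫_0^t b(a) τ(t−a) da + I0 τbar(t))`;
equivalently, extending `b` to the negative half-line by `b(−u) = I0 g(u)`,
`b(t) = c(t) S(t) ∫_{−∞}^t b(a) τ(t−a) da` for a.e. `t ≥ 0`. -/

theorem renewal_equation_for_density
    (I0 : ℝ) (hI0 : I0 ∈ Set.Ioo (0:ℝ) 1)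
    (c : ℝ → ℝ) (hcm : Measurable c) (hc01 : ∀ t, 0 ≤ t → c t ∈ Set.Icc (0:ℝ) 1)
    (g : ℝ → ℝ) (hgm : Measurable g) (hg0 : ∀ a, 0 ≤ g a)
    (hg1 : ∫ a in Set.Ioi (0:ℝ), g a = 1)
    (τ : ℝ → ℝ) (hτm : Measurable τ) (hτ0 : ∀ a, 0 ≤ τ a)
    (hτint : IntegrableOn τ (Set.Ioi 0))
    (τbar : ℝ → ℝ) (hτbar : ∀ s, τbar s = ∫ a in Set.Ioi (0:ℝ), g a * τ (a + s))
    (B : ℝ → ℝ) (hB : IsDelaySolution I0 c τ τbar B)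
    (b : ℝ → ℝ) (hbm : Measurable b) (hb0 : ∀ s, 0 ≤ b s)
    (hbloc : ∀ t, 0 ≤ t → IntegrableOn b (Set.Icc 0 t))
    (hBb : ∀ t, 0 ≤ t → B t = ∫ s in Set.Ioc (0:ℝ) t, b s)
    (S : ℝ → ℝ) (hS : ∀ t, S t = (1 - I0) - B t) :
    (∀ᵐ t ∂(volume.restrict (Set.Ioi (0:ℝ))),
      b t = c t * S t * ((∫ a in Set.Ioc (0:ℝ) t, b a * τ (t - a)) + I0 * τbar t)) ∧
    (∀ᵐ t ∂(volume.restrict (Set.Ioi (0:ℝ))),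
      b t = c t * S t *
        ∫ a in Set.Iio t, (if a < 0 then I0 * g (-a) else b a) * τ (t - a)) := by
  classical
  obtain ⟨hI0pos, hI0lt⟩ := hI0
  obtain ⟨hBmono, hBneg, hBnn, hBeq⟩ := hB
  -- basic integrability of b
  have hbint : ∀ T : ℝ, IntegrableOn b (Ioc 0 T) := by
    intro T
    rcases le_or_gt T 0 with hT | hT
    · rw [Ioc_eq_empty (by exact fun h => absurd hT (not_le.2 h))]
      exact integrableOn_empty
    · exact (hbloc T hT.le).mono_set Ioc_subset_Icc_self
  have hB0 : ∀ t, t ≤ 0 → B t = 0 := by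
    intro t ht
    rcases lt_or_eq_of_le ht with h | h
    · exact hBneg t h
    · subst h; rw [hBb 0 le_rfl]; simp
  -- identification of the Stieltjes measure of B
  have hμB : stieltjesMeasureOf B
      = volume.withDensity ((Ioi (0:ℝ)).indicator fun x => ENNReal.ofReal (b x)) := by
    unfold stieltjesMeasureOf
    rw [dif_pos hBmono]
    exact RenewalAux.aux_measure hbm (fun x _ => hb0 x) hbint hB0 (fun t ht => hBb t ht) hBmono
  -- the Stieltjes integral is a convolution
  have hstint : ∀ s : ℝ, (∫ a in Icc (0:ℝ) s, τ (s - a) ∂(stieltjesMeasureOf B))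
      = ∫ a in Ioc (0:ℝ) s, b a * τ (s - a) := by
    intro s
    have hρ : ((Ioi (0:ℝ)).indicator fun x => ENNReal.ofReal (b x))
        = fun x => (((Ioi (0:ℝ)).indicator (fun x => Real.toNNReal (b x)) x : ℝ≥0) : ℝ≥0∞) := by
      funext x
      by_cases hx : x ∈ Ioi (0:ℝ) <;>
        simp [indicator_of_mem, indicator_of_notMem, hx, ENNReal.ofReal]
    rw [hμB, hρ, restrict_withDensity measurableSet_Icc]
    have hwd := integral_withDensity_eq_integral_smul
      (μ := volume.restrict (Icc (0:ℝ) s))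
      (f := fun x => (Ioi (0:ℝ)).indicator (fun x => Real.toNNReal (b x)) x)
      (by exact (measurable_real_toNNReal.comp hbm).indicator measurableSet_Ioi)
      (fun a => τ (s - a))
    rw [hwd]
    have hfun : (fun a => ((Ioi (0:ℝ)).indicator (fun x => Real.toNNReal (b x)) a) • τ (s - a))
        = (Ioi (0:ℝ)).indicator (fun a => b a * τ (s - a)) := by
      funext a
      by_cases ha : a ∈ Ioi (0:ℝ)
      · simp [indicator_of_mem ha, NNReal.smul_def, Real.coe_toNNReal _ (hb0 a)]
      · simp [indicator_of_notMem ha]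
    rw [hfun, setIntegral_indicator measurableSet_Ioi,
      show Icc (0:ℝ) s ∩ Ioi 0 = Ioc 0 s by
        ext x
        simp only [mem_inter_iff, mem_Icc, mem_Ioi, mem_Ioc]
        constructor
        · rintro ⟨⟨_, h2⟩, h3⟩; exact ⟨h3, h2⟩
        · rintro ⟨h1, h2⟩; exact ⟨⟨h1.le, h2⟩, h1⟩]
  -- measurability of τbar and K
  have hτbarm : Measurable τbar := by
    have : τbar = fun s => ∫ a in Ioi (0:ℝ), g a * τ (a + s) := funext hτbar
    rw [this]
    have hsm : StronglyMeasurable fun p : ℝ × ℝ => g p.2 * τ (p.2 + p.1) :=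
      ((hgm.comp measurable_snd).mul
        (hτm.comp (measurable_snd.add measurable_fst))).stronglyMeasurable
    exact (hsm.integral_prod_right' (ν := volume.restrict (Ioi 0))).measurable
  have hτbar0 : ∀ s, 0 ≤ τbar s := fun s => by
    rw [hτbar s]
    exact setIntegral_nonneg measurableSet_Ioi fun a _ => mul_nonneg (hg0 a) (hτ0 _)
  have hSmeas : MeasurableSet {q : ℝ × ℝ | 0 < q.2 ∧ q.2 ≤ q.1} :=
    (measurableSet_lt measurable_const measurable_snd).inter
      (measurableSet_le measurable_snd measurable_fst)
  set K : ℝ → ℝ := fun s => ∫ a in Ioc (0:ℝ) s, b a * τ (s - a) with hKdef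
  have hK0 : ∀ s, 0 ≤ K s := fun s =>
    setIntegral_nonneg measurableSet_Ioc fun a _ => mul_nonneg (hb0 a) (hτ0 _)
  have hKm : Measurable K := by
    have hsm : StronglyMeasurable fun p : ℝ × ℝ =>
        ({q : ℝ × ℝ | 0 < q.2 ∧ q.2 ≤ q.1}.indicator (fun q => b q.2 * τ (q.1 - q.2))) p :=
      (((hbm.comp measurable_snd).mul
        (hτm.comp (measurable_fst.sub measurable_snd))).indicator hSmeas).stronglyMeasurable
    have hmm := (hsm.integral_prod_right' (ν := volume)).measurable
    have : K = fun s => ∫ a,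
        ({q : ℝ × ℝ | 0 < q.2 ∧ q.2 ≤ q.1}.indicator (fun q => b q.2 * τ (q.1 - q.2))) (s, a) := by
      funext s
      show (∫ a in Ioc (0:ℝ) s, b a * τ (s - a)) = _
      rw [← integral_indicator measurableSet_Ioc]
      apply integral_congr_ae
      filter_upwards with a
      by_cases ha : a ∈ Ioc (0:ℝ) s
      · rw [indicator_of_mem ha, indicator_of_mem (by exact ha)]
      · rw [indicator_of_notMem ha, indicator_of_notMem (by exact ha)]
    rw [this]; exact hmm
  -- the function f
  set f : ℝ → ℝ := fun s => c s * (K s + I0 * τbar s) with hfdef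
  have hfm : Measurable f := hcm.mul (hKm.add (hτbarm.const_mul I0))
  have hf0 : ∀ s, 0 < s → 0 ≤ f s := fun s hs =>
    mul_nonneg (hc01 s hs.le).1 (add_nonneg (hK0 s) (mul_nonneg hI0pos.le (hτbar0 s)))
  -- rewrite the delay equation
  have hBeq' : ∀ t, 0 ≤ t →
      B t = (1 - I0) * (1 - Real.exp (-(∫ s in Ioc (0:ℝ) t, f s))) := by
    intro t ht
    have hint : ∀ s : ℝ,
        c s * ((∫ a in Icc (0:ℝ) s, τ (s - a) ∂(stieltjesMeasureOf B)) + I0 * τbar s) = f s :=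
      fun s => by rw [hstint s]
    rw [hBeq t ht]
    simp only [hint]
  -- facts about g
  have hgint : IntegrableOn g (Ioi 0) := by
    by_contra hgi
    rw [integral_undef hgi] at hg1
    exact one_ne_zero hg1.symm
  have hglint : (∫⁻ a in Ioi (0:ℝ), ENNReal.ofReal (g a)) = 1 := by
    rw [← ofReal_integral_eq_lintegral_ofReal hgint (Eventually.of_forall fun a => hg0 a), hg1,
      ENNReal.ofReal_one]
  -- the tail bound function
  set φ : ℝ → ℝ≥0∞ := (Ici (0:ℝ)).indicator fun y => ENNReal.ofReal (τ y) with hφdef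
  have hφm : Measurable φ := (hτm.ennreal_ofReal).indicator measurableSet_Ici
  set R : ℝ≥0∞ := ∫⁻ y, φ y with hRdef
  have hRfin : R < ⊤ := by
    have h1 : R = ∫⁻ y in Ici (0:ℝ), ENNReal.ofReal (τ y) := lintegral_indicator measurableSet_Ici _
    have h2 : (∫⁻ y in Ici (0:ℝ), ENNReal.ofReal (τ y))
        = ∫⁻ y in Ioi (0:ℝ), ENNReal.ofReal (τ y) := (setLIntegral_congr Ioi_ae_eq_Ici).symm
    have h3 : (∫⁻ y in Ioi (0:ℝ), ENNReal.ofReal (τ y)) = ∫⁻ y in Ioi (0:ℝ), (‖τ y‖₊ : ℝ≥0∞) :=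
      lintegral_congr fun y => (Real.enorm_eq_ofReal (hτ0 y)).symm
    rw [h1, h2, h3]
    exact hτint.2
  have hshift : ∀ y : ℝ, (∫⁻ x, φ (x - y)) = R := by
    intro y
    have hmp : MeasurePreserving (fun x : ℝ => x + (-y)) volume volume :=
      measurePreserving_add_right volume (-y)
    have := hmp.lintegral_comp hφm
    simpa [sub_eq_add_neg] using this
  have hbfin : ∀ T : ℝ, (∫⁻ a in Ioc (0:ℝ) T, ENNReal.ofReal (b a)) < ⊤ := by
    intro T
    have h3 : (∫⁻ a in Ioc (0:ℝ) T, ENNReal.ofReal (b a))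
        = ∫⁻ a in Ioc (0:ℝ) T, (‖b a‖₊ : ℝ≥0∞) :=
      lintegral_congr fun a => (Real.enorm_eq_ofReal (hb0 a)).symm
    rw [h3]; exact (hbint T).2
  set Φ : ℝ × ℝ → ℝ≥0∞ := fun q => ({q : ℝ × ℝ | 0 < q.2 ∧ q.2 ≤ q.1}.indicator
      (fun q => ENNReal.ofReal (b q.2 * τ (q.1 - q.2)))) q with hΦdef
  have hΦm : Measurable Φ := (((hbm.comp measurable_snd).mul
      (hτm.comp (measurable_fst.sub measurable_snd))).ennreal_ofReal).indicator hSmeas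
  set L : ℝ → ℝ≥0∞ := fun s => ∫⁻ a, Φ (s, a) with hLdef
  have hLm : Measurable L := hΦm.lintegral_prod_right'
  have hLeq : ∀ s : ℝ, L s = ∫⁻ a in Ioc (0:ℝ) s, ENNReal.ofReal (b a * τ (s - a)) := by
    intro s
    simp only [hLdef, hΦdef]
    rw [← lintegral_indicator measurableSet_Ioc]
    refine lintegral_congr fun a => ?_
    by_cases ha : a ∈ Ioc (0:ℝ) s
    · rw [indicator_of_mem (show ((s,a) : ℝ × ℝ) ∈ {q : ℝ × ℝ | 0 < q.2 ∧ q.2 ≤ q.1} from ha),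
        indicator_of_mem ha]
    · rw [indicator_of_notMem (show ((s,a) : ℝ × ℝ) ∉ {q : ℝ × ℝ | 0 < q.2 ∧ q.2 ≤ q.1} from ha),
        indicator_of_notMem ha]
  -- finiteness of the double integral for the convolution term
  have hLfin : ∀ T : ℝ, (∫⁻ s in Ioc (0:ℝ) T, L s) < ⊤ := by
    intro T
    have hL_eqT : ∀ s ∈ Ioc (0:ℝ) T, L s = ∫⁻ a in Ioc (0:ℝ) T, Φ (s, a) := by
      intro s hs
      rw [← lintegral_indicator measurableSet_Ioc]
      refine lintegral_congr fun a => ?_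
      by_cases ha : a ∈ Ioc (0:ℝ) T
      · rw [indicator_of_mem ha]
      · rw [indicator_of_notMem ha]
        simp only [hΦdef]
        apply indicator_of_notMem
        rintro ⟨h1, h2⟩
        exact ha ⟨h1, h2.trans hs.2⟩
    have hswap : (∫⁻ s in Ioc (0:ℝ) T, ∫⁻ a in Ioc (0:ℝ) T, Φ (s, a))
        = ∫⁻ a in Ioc (0:ℝ) T, ∫⁻ s in Ioc (0:ℝ) T, Φ (s, a) :=
      lintegral_lintegral_swap (hΦm.aemeasurable)
    have h1 : (∫⁻ s in Ioc (0:ℝ) T, L s) = ∫⁻ a in Ioc (0:ℝ) T, ∫⁻ s in Ioc (0:ℝ) T, Φ (s, a) := by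
      rw [← hswap]
      exact setLIntegral_congr_fun measurableSet_Ioc hL_eqT
    rw [h1]
    have h2 : ∀ a : ℝ, (∫⁻ s in Ioc (0:ℝ) T, Φ (s, a)) ≤ ENNReal.ofReal (b a) * R := by
      intro a
      have hb1 : ∀ s : ℝ, Φ (s, a) ≤ ENNReal.ofReal (b a) * φ (s - a) := by
        intro s
        simp only [hΦdef]
        by_cases hmem : ((s,a) : ℝ × ℝ) ∈ {q : ℝ × ℝ | 0 < q.2 ∧ q.2 ≤ q.1}
        · rw [indicator_of_mem hmem, ENNReal.ofReal_mul (hb0 a)]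
          simp only [hφdef]
          rw [indicator_of_mem (show s - a ∈ Ici (0:ℝ) from sub_nonneg.2 hmem.2)]
        · rw [indicator_of_notMem hmem]; exact zero_le
      calc (∫⁻ s in Ioc (0:ℝ) T, Φ (s, a))
          ≤ ∫⁻ s in Ioc (0:ℝ) T, ENNReal.ofReal (b a) * φ (s - a) := lintegral_mono fun s => hb1 s
        _ ≤ ∫⁻ s, ENNReal.ofReal (b a) * φ (s - a) :=
            lintegral_mono' Measure.restrict_le_self le_rfl
        _ = ENNReal.ofReal (b a) * ∫⁻ s, φ (s - a) :=
            lintegral_const_mul _ (hφm.comp (measurable_id.sub measurable_const))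
        _ = ENNReal.ofReal (b a) * R := by rw [hshift a]
    calc (∫⁻ a in Ioc (0:ℝ) T, ∫⁻ s in Ioc (0:ℝ) T, Φ (s, a))
        ≤ ∫⁻ a in Ioc (0:ℝ) T, ENNReal.ofReal (b a) * R := lintegral_mono fun a => h2 a
      _ = (∫⁻ a in Ioc (0:ℝ) T, ENNReal.ofReal (b a)) * R :=
          lintegral_mul_const _ hbm.ennreal_ofReal
      _ < ⊤ := ENNReal.mul_lt_top (hbfin T) hRfin
  -- finiteness for the τbar term
  have hLbfin : ∀ T : ℝ, (∫⁻ s in Ioc (0:ℝ) T,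
      ∫⁻ a in Ioi (0:ℝ), ENNReal.ofReal (g a * τ (a + s))) < ⊤ := by
    intro T
    have hmprod : AEMeasurable (uncurry fun (s a : ℝ) => ENNReal.ofReal (g a * τ (a + s)))
        ((volume.restrict (Ioc (0:ℝ) T)).prod (volume.restrict (Ioi (0:ℝ)))) :=
      (((hgm.comp measurable_snd).mul
        (hτm.comp (measurable_snd.add measurable_fst))).ennreal_ofReal).aemeasurable
    rw [lintegral_lintegral_swap hmprod]
    have h2 : ∀ a ∈ Ioi (0:ℝ), (∫⁻ s in Ioc (0:ℝ) T, ENNReal.ofReal (g a * τ (a + s)))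
        ≤ ENNReal.ofReal (g a) * R := by
      intro a ha
      have hb1 : ∀ s ∈ Ioc (0:ℝ) T,
          ENNReal.ofReal (g a * τ (a + s)) ≤ ENNReal.ofReal (g a) * φ (s - (-a)) := by
        intro s hs
        rw [ENNReal.ofReal_mul (hg0 a)]
        simp only [hφdef, sub_neg_eq_add]
        rw [indicator_of_mem (show s + a ∈ Ici (0:ℝ) by
          simp only [mem_Ici]
          have := le_of_lt (mem_Ioi.1 ha); have := le_of_lt hs.1; linarith), add_comm a s]
      calc (∫⁻ s in Ioc (0:ℝ) T, ENNReal.ofReal (g a * τ (a + s)))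
          ≤ ∫⁻ s in Ioc (0:ℝ) T, ENNReal.ofReal (g a) * φ (s - (-a)) :=
            setLIntegral_mono (measurable_const.mul (hφm.comp
              (measurable_id.sub measurable_const))) hb1
        _ ≤ ∫⁻ s, ENNReal.ofReal (g a) * φ (s - (-a)) :=
            lintegral_mono' Measure.restrict_le_self le_rfl
        _ = ENNReal.ofReal (g a) * ∫⁻ s, φ (s - (-a)) :=
            lintegral_const_mul _ (hφm.comp (measurable_id.sub measurable_const))
        _ = ENNReal.ofReal (g a) * R := by rw [hshift (-a)]
    calc (∫⁻ a in Ioi (0:ℝ), ∫⁻ s in Ioc (0:ℝ) T, ENNReal.ofReal (g a * τ (a + s)))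
        ≤ ∫⁻ a in Ioi (0:ℝ), ENNReal.ofReal (g a) * R :=
          setLIntegral_mono (hgm.ennreal_ofReal.mul_const _) h2
      _ = (∫⁻ a in Ioi (0:ℝ), ENNReal.ofReal (g a)) * R :=
          lintegral_mul_const _ hgm.ennreal_ofReal
      _ = R := by rw [hglint, one_mul]
      _ < ⊤ := hRfin
  -- the negative-side kernel
  set Ψ : ℝ × ℝ → ℝ≥0∞ := fun q => ({q : ℝ × ℝ | q.2 < 0}.indicator
      (fun q => ENNReal.ofReal (g (-q.2) * τ (q.1 - q.2)))) q with hΨdef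
  have hΨm : Measurable Ψ := (((hgm.comp measurable_snd.neg).mul
      (hτm.comp (measurable_fst.sub measurable_snd))).ennreal_ofReal).indicator
      (measurableSet_lt measurable_snd measurable_const)
  set Lg : ℝ → ℝ≥0∞ := fun s => ∫⁻ a, Ψ (s, a) with hLgdef
  have hLgm : Measurable Lg := hΨm.lintegral_prod_right'
  have hLgeq : ∀ s : ℝ, Lg s = ∫⁻ a in Iio (0:ℝ), ENNReal.ofReal (g (-a) * τ (s - a)) := by
    intro s
    simp only [hLgdef, hΨdef]
    rw [← lintegral_indicator measurableSet_Iio]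
    refine lintegral_congr fun a => ?_
    by_cases ha : a ∈ Iio (0:ℝ)
    · rw [indicator_of_mem (show ((s,a) : ℝ × ℝ) ∈ {q : ℝ × ℝ | q.2 < 0} from ha),
        indicator_of_mem ha]
    · rw [indicator_of_notMem (show ((s,a) : ℝ × ℝ) ∉ {q : ℝ × ℝ | q.2 < 0} from ha),
        indicator_of_notMem ha]
  have hgnegint : (∫⁻ a in Iio (0:ℝ), ENNReal.ofReal (g (-a))) = 1 := by
    have hmp : MeasurePreserving (fun x : ℝ => -x) volume volume :=
      Measure.measurePreserving_neg _
    have h1 := hmp.lintegral_comp (f := (Ioi (0:ℝ)).indicator fun u => ENNReal.ofReal (g u))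
      (hgm.ennreal_ofReal.indicator measurableSet_Ioi)
    rw [lintegral_indicator measurableSet_Ioi] at h1
    rw [← lintegral_indicator measurableSet_Iio, ← hglint, ← h1]
    refine lintegral_congr fun a => ?_
    by_cases ha : a ∈ Iio (0:ℝ)
    · rw [indicator_of_mem ha,
        indicator_of_mem (show -a ∈ Ioi (0:ℝ) from mem_Ioi.2 (neg_pos.2 (mem_Iio.1 ha)))]
    · rw [indicator_of_notMem ha, indicator_of_notMem (show -a ∉ Ioi (0:ℝ) from
        fun h => ha (mem_Iio.2 (by have := mem_Ioi.1 h; linarith)))]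
  have hLgfin : ∀ T : ℝ, (∫⁻ s in Ioc (0:ℝ) T, Lg s) < ⊤ := by
    intro T
    have heq : (∫⁻ s in Ioc (0:ℝ) T, Lg s)
        = ∫⁻ s in Ioc (0:ℝ) T, ∫⁻ a in Iio (0:ℝ), ENNReal.ofReal (g (-a) * τ (s - a)) :=
      setLIntegral_congr_fun measurableSet_Ioc (fun s _ => hLgeq s)
    rw [heq]
    have hmprod : AEMeasurable (uncurry fun (s a : ℝ) => ENNReal.ofReal (g (-a) * τ (s - a)))
        ((volume.restrict (Ioc (0:ℝ) T)).prod (volume.restrict (Iio (0:ℝ)))) :=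
      (((hgm.comp measurable_snd.neg).mul
        (hτm.comp (measurable_fst.sub measurable_snd))).ennreal_ofReal).aemeasurable
    rw [lintegral_lintegral_swap hmprod]
    have h2 : ∀ a ∈ Iio (0:ℝ), (∫⁻ s in Ioc (0:ℝ) T, ENNReal.ofReal (g (-a) * τ (s - a)))
        ≤ ENNReal.ofReal (g (-a)) * R := by
      intro a ha
      have hb1 : ∀ s ∈ Ioc (0:ℝ) T,
          ENNReal.ofReal (g (-a) * τ (s - a)) ≤ ENNReal.ofReal (g (-a)) * φ (s - a) := by
        intro s hs
        rw [ENNReal.ofReal_mul (hg0 (-a))]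
        simp only [hφdef]
        rw [indicator_of_mem (show s - a ∈ Ici (0:ℝ) by
          have h3 := mem_Iio.1 ha; have h4 := hs.1; simp only [mem_Ici]; linarith)]
      calc (∫⁻ s in Ioc (0:ℝ) T, ENNReal.ofReal (g (-a) * τ (s - a)))
          ≤ ∫⁻ s in Ioc (0:ℝ) T, ENNReal.ofReal (g (-a)) * φ (s - a) :=
            setLIntegral_mono (measurable_const.mul (hφm.comp
              (measurable_id.sub measurable_const))) hb1
        _ ≤ ∫⁻ s, ENNReal.ofReal (g (-a)) * φ (s - a) :=
            lintegral_mono' Measure.restrict_le_self le_rfl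
        _ = ENNReal.ofReal (g (-a)) * ∫⁻ s, φ (s - a) :=
            lintegral_const_mul _ (hφm.comp (measurable_id.sub measurable_const))
        _ = ENNReal.ofReal (g (-a)) * R := by rw [hshift a]
    calc (∫⁻ a in Iio (0:ℝ), ∫⁻ s in Ioc (0:ℝ) T, ENNReal.ofReal (g (-a) * τ (s - a)))
        ≤ ∫⁻ a in Iio (0:ℝ), ENNReal.ofReal (g (-a)) * R :=
          setLIntegral_mono ((hgm.comp measurable_neg).ennreal_ofReal.mul_const _) h2
      _ = (∫⁻ a in Iio (0:ℝ), ENNReal.ofReal (g (-a))) * R :=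
          lintegral_mul_const _ (hgm.comp measurable_neg).ennreal_ofReal
      _ = R := by rw [hgnegint, one_mul]
      _ < ⊤ := hRfin
  -- a.e. finiteness
  have haeL : ∀ᵐ t : ℝ, 0 < t → L t < ⊤ ∧ Lg t < ⊤ := by
    have h1 : ∀ n : ℕ, ∀ᵐ t : ℝ, t ∈ Ioc (0:ℝ) n → L t < ⊤ ∧ Lg t < ⊤ := by
      intro n
      have e1 := ae_lt_top hLm (hLfin n).ne
      have e2 := ae_lt_top hLgm (hLgfin n).ne
      exact (ae_restrict_iff' measurableSet_Ioc).1 (e1.and e2)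
    rw [← ae_all_iff] at h1
    filter_upwards [h1] with t ht htpos
    exact ht ⌈t⌉₊ ⟨htpos, Nat.le_ceil t⟩
  -- f is locally integrable
  have hτbarfin : ∀ T : ℝ, (∫⁻ s in Ioc (0:ℝ) T, ENNReal.ofReal (τbar s)) < ⊤ := by
    intro T
    refine lt_of_le_of_lt ?_ (hLbfin T)
    refine lintegral_mono fun s => ?_
    rw [hτbar s]
    exact RenewalAux.ofReal_integral_le _ ((ae_restrict_iff' measurableSet_Ioi).2
      (Eventually.of_forall fun a _ => mul_nonneg (hg0 a) (hτ0 _)))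
  have hKfin : ∀ T : ℝ, (∫⁻ s in Ioc (0:ℝ) T, ENNReal.ofReal (K s)) < ⊤ := by
    intro T
    refine lt_of_le_of_lt ?_ (hLfin T)
    refine lintegral_mono fun s => ?_
    rw [hLeq s]
    exact RenewalAux.ofReal_integral_le _ ((ae_restrict_iff' measurableSet_Ioc).2
      (Eventually.of_forall fun a _ => mul_nonneg (hb0 a) (hτ0 _)))
  have hfint : ∀ T : ℝ, IntegrableOn f (Ioc 0 T) := by
    intro T
    have hKint : IntegrableOn K (Ioc 0 T) := by
      refine ⟨hKm.aestronglyMeasurable.restrict, ?_⟩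
      rw [hasFiniteIntegral_iff_ofReal ((ae_restrict_iff' measurableSet_Ioc).2
        (Eventually.of_forall fun s _ => hK0 s))]
      exact hKfin T
    have hτbarint : IntegrableOn τbar (Ioc 0 T) := by
      refine ⟨hτbarm.aestronglyMeasurable.restrict, ?_⟩
      rw [hasFiniteIntegral_iff_ofReal ((ae_restrict_iff' measurableSet_Ioc).2
        (Eventually.of_forall fun s _ => hτbar0 s))]
      exact hτbarfin T
    refine Integrable.mono' (hKint.add (hτbarint.const_mul I0))
      (hfm.aestronglyMeasurable.restrict) ?_
    refine (ae_restrict_iff' measurableSet_Ioc).2 (Eventually.of_forall fun s hs => ?_)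
    have h1 : 0 ≤ K s + I0 * τbar s :=
      add_nonneg (hK0 s) (mul_nonneg hI0pos.le (hτbar0 s))
    rw [Real.norm_eq_abs, abs_of_nonneg (hf0 s hs.1)]
    calc f s ≤ 1 * (K s + I0 * τbar s) := by
          simp only [hfdef]
          exact mul_le_mul_of_nonneg_right (hc01 s hs.1.le).2 h1
      _ = K s + I0 * τbar s := one_mul _
  -- the primitive G of f
  set G : ℝ → ℝ := fun t => if 0 ≤ t then ∫ s in Ioc (0:ℝ) t, f s else 0 with hGdef
  have hG0 : ∀ t, t ≤ 0 → G t = 0 := by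
    intro t ht
    rcases lt_or_eq_of_le ht with h | h
    · simp only [hGdef, if_neg (not_le.2 h)]
    · subst h; simp [hGdef]
  have hGt : ∀ t, 0 ≤ t → G t = ∫ s in Ioc (0:ℝ) t, f s := fun t ht => if_pos ht
  have hGd := RenewalAux.aux_deriv hfm hf0 hfint hG0 hGt
  have hBd := RenewalAux.aux_deriv hbm (fun x _ => hb0 x) hbint hB0 (fun t ht => hBb t ht)
  -- main pointwise identity
  have hmain : ∀ᵐ t : ℝ, 0 < t → b t = c t * S t * (K t + I0 * τbar t) := by
    filter_upwards [hGd, hBd] with t hG hBder htpos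
    have hG' := hG htpos
    have hB' := hBder htpos
    have hΨd : HasDerivAt (fun u => (1 - I0) * (1 - Real.exp (-G u)))
        ((1 - I0) * (Real.exp (-G t) * f t)) t := by
      have h1 : HasDerivAt (fun u => -G u) (-f t) t := hG'.neg
      have h2 : HasDerivAt (fun u => Real.exp (-G u)) (Real.exp (-G t) * -f t) t := h1.exp
      have h3 := (h2.const_sub 1).const_mul (1 - I0)
      exact h3.congr_deriv (by ring)
    have hBΨ : HasDerivAt B ((1 - I0) * (Real.exp (-G t) * f t)) t := by
      apply hΨd.congr_of_eventuallyEq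
      filter_upwards [(isOpen_Ioi).mem_nhds (mem_Ioi.2 htpos)] with y hy
      rw [hBeq' y (le_of_lt hy), hGt y (le_of_lt hy)]
    have hbt : b t = (1 - I0) * (Real.exp (-G t) * f t) := hB'.unique hBΨ
    have hSt : S t = (1 - I0) * Real.exp (-G t) := by
      rw [hS t, hBeq' t htpos.le, ← hGt t htpos.le]
      ring
    rw [hbt, hSt]
    simp only [hfdef]
    ring
  have part1 : ∀ᵐ t ∂(volume.restrict (Ioi (0:ℝ))),
      b t = c t * S t * ((∫ a in Ioc (0:ℝ) t, b a * τ (t - a)) + I0 * τbar t) := by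
    rw [ae_restrict_iff' measurableSet_Ioi]
    filter_upwards [hmain] with t ht htpos
    exact ht htpos
  refine ⟨part1, ?_⟩
  rw [ae_restrict_iff' measurableSet_Ioi]
  filter_upwards [hmain, haeL] with t hmt hfin htpos
  obtain ⟨hLt, hLgt⟩ := hfin htpos
  -- integrability of the two pieces
  have hint1 : IntegrableOn (fun a => g (-a) * τ (t - a)) (Iio 0) := by
    refine ⟨((hgm.comp measurable_neg).mul
      (hτm.comp (measurable_const.sub measurable_id))).aestronglyMeasurable.restrict, ?_⟩
    rw [hasFiniteIntegral_iff_ofReal ((ae_restrict_iff' measurableSet_Iio).2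
      (Eventually.of_forall fun a _ => mul_nonneg (hg0 _) (hτ0 _)))]
    rw [← hLgeq t]
    exact hLgt
  have hint2 : IntegrableOn (fun a => b a * τ (t - a)) (Ioc 0 t) := by
    refine ⟨(hbm.mul
      (hτm.comp (measurable_const.sub measurable_id))).aestronglyMeasurable.restrict, ?_⟩
    rw [hasFiniteIntegral_iff_ofReal ((ae_restrict_iff' measurableSet_Ioc).2
      (Eventually.of_forall fun a _ => mul_nonneg (hb0 _) (hτ0 _)))]
    rw [← hLeq t]
    exact hLt
  have hint2' : IntegrableOn (fun a => b a * τ (t - a)) (Ico 0 t) := by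
    rw [IntegrableOn, Measure.restrict_congr_set Ico_ae_eq_Ioc]
    exact hint2
  have hsplit : Iio t = Iio 0 ∪ Ico 0 t := by
    ext x
    simp only [mem_Iio, mem_union, mem_Ico]
    constructor
    · intro hx
      rcases lt_or_ge x 0 with h | h
      exacts [Or.inl h, Or.inr ⟨h, hx⟩]
    · rintro (h | ⟨_, h⟩)
      exacts [h.trans htpos, h]
  have hd : Disjoint (Iio (0:ℝ)) (Ico 0 t) := by
    rw [disjoint_left]
    rintro x hx ⟨h0x, _⟩
    exact absurd h0x (not_le.2 hx)
  have hint1' : IntegrableOn (fun a => (if a < 0 then I0 * g (-a) else b a) * τ (t - a)) (Iio 0) := by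
    refine IntegrableOn.congr_fun (hint1.const_mul I0) ?_ measurableSet_Iio
    intro a ha
    simp only [if_pos (mem_Iio.1 ha)]
    ring
  have hint2'' : IntegrableOn (fun a => (if a < 0 then I0 * g (-a) else b a) * τ (t - a))
      (Ico 0 t) := by
    refine IntegrableOn.congr_fun hint2' ?_ measurableSet_Ico
    intro a ha
    simp only [if_neg (not_lt.2 ha.1)]
  have hsum : (∫ a in Iio t, (if a < 0 then I0 * g (-a) else b a) * τ (t - a))
      = (∫ a in Iio 0, (if a < 0 then I0 * g (-a) else b a) * τ (t - a))
        + ∫ a in Ico 0 t, (if a < 0 then I0 * g (-a) else b a) * τ (t - a) := by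
    rw [hsplit]
    exact setIntegral_union hd measurableSet_Ico hint1' hint2''
  have hIio : (∫ a in Iio 0, (if a < 0 then I0 * g (-a) else b a) * τ (t - a)) = I0 * τbar t := by
    have e1 : (∫ a in Iio 0, (if a < 0 then I0 * g (-a) else b a) * τ (t - a))
        = ∫ a in Iio 0, I0 * (g (-a) * τ (t - a)) := by
      refine setIntegral_congr_fun measurableSet_Iio fun a ha => ?_
      simp only [if_pos (mem_Iio.1 ha)]
      ring
    rw [e1, integral_const_mul]
    congr 1
    have e2 := integral_comp_neg_Ioi (0:ℝ) (fun a => g (-a) * τ (t - a))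
    simp only [neg_neg, neg_zero, sub_neg_eq_add] at e2
    rw [← integral_Iic_eq_integral_Iio, ← e2, hτbar t]
    refine setIntegral_congr_fun measurableSet_Ioi fun x _ => ?_
    rw [add_comm]
  have hIco : (∫ a in Ico 0 t, (if a < 0 then I0 * g (-a) else b a) * τ (t - a)) = K t := by
    rw [show volume.restrict (Ico (0:ℝ) t) = volume.restrict (Ioc 0 t) from
      Measure.restrict_congr_set Ico_ae_eq_Ioc]
    refine setIntegral_congr_fun measurableSet_Ioc fun a ha => ?_
    simp only [if_neg (not_lt.2 ha.1.le)]
  rw [hmt htpos, hsum, hIio, hIco]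
  ring
end

section
/- Mapping theorem for random measures converging in probability: let S and E be Polish spaces, and for each N let μ_N be a random probability measure on S such that μ_N converges in probability (for the weak topology on probability measures) to a deterministic probability measure μ on S. Let Φ : S → E be Borel measurable and continuous at every point of a Borel set A ⊆ S with μ(A) = 1. Then the pushforward random measures μ_N ∘ Φ^{−1} converge in probability (for the weak topology on probability measures on E) to μ ∘ Φ^{−1}. -/
open MeasureTheory Set Filter Topology

/-- Deterministic mapping theorem: if probability measures `μs` converge weakly to `νP` and
`Φ` is measurable and continuous on a full-measure set `A`, then the pushforwards converge. -/
lemma aux_mapping_tendsto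
    {S : Type*} [MetricSpace S] [MeasurableSpace S] [BorelSpace S]
    {E : Type*} [MetricSpace E] [MeasurableSpace E] [BorelSpace E]
    (Φ : S → E) (hΦ : Measurable Φ)
    (A : Set S) (hcont : ∀ x ∈ A, ContinuousAt Φ x)
    (νP : ProbabilityMeasure S) (hνA : (νP : Measure S) Aᶜ = 0)
    (μs : ℕ → ProbabilityMeasure S) (hμs : Tendsto μs atTop (𝓝 νP)) :
    Tendsto (fun n => (μs n).map hΦ.aemeasurable) atTop (𝓝 (νP.map hΦ.aemeasurable)) := by
  apply tendsto_of_forall_isOpen_le_liminf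
  intro U U_open
  have hsub : Φ ⁻¹' U ∩ A ⊆ interior (Φ ⁻¹' U) := by
    intro x ⟨hxU, hxA⟩
    rw [mem_interior_iff_mem_nhds]
    exact (hcont x hxA) (U_open.mem_nhds hxU)
  have step1 : (νP : Measure S) (Φ ⁻¹' U) ≤
      atTop.liminf (fun i => ((μs i : Measure S) (Φ ⁻¹' U))) := by
    calc (νP : Measure S) (Φ ⁻¹' U) = (νP : Measure S) (Φ ⁻¹' U ∩ A) :=
          (measure_inter_conull hνA).symm
      _ ≤ (νP : Measure S) (interior (Φ ⁻¹' U)) := measure_mono hsub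
      _ ≤ atTop.liminf (fun i => (μs i : Measure S) (interior (Φ ⁻¹' U))) :=
          ProbabilityMeasure.le_liminf_measure_open_of_tendsto hμs isOpen_interior
      _ ≤ atTop.liminf (fun i => (μs i : Measure S) (Φ ⁻¹' U)) :=
          liminf_le_liminf (Eventually.of_forall fun i => measure_mono interior_subset)
  have aux : ENNReal.ofNNReal (liminf (fun i => (μs i) (Φ ⁻¹' U)) atTop) =
      liminf (ENNReal.ofNNReal ∘ fun i => (μs i) (Φ ⁻¹' U)) atTop := by
    refine Monotone.map_liminf_of_continuousAt (F := atTop) ENNReal.coe_mono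
      (fun i => (μs i) (Φ ⁻¹' U)) ?_ ?_ ?_
    · exact ENNReal.continuous_coe.continuousAt
    · exact IsBoundedUnder.isCoboundedUnder_ge ⟨1, by simp⟩
    · exact ⟨0, by simp⟩
  have obs : ∀ (ρ : ProbabilityMeasure S),
      (ρ.map hΦ.aemeasurable) U = ρ (Φ ⁻¹' U) :=
    fun ρ => ρ.map_apply hΦ.aemeasurable U_open.measurableSet
  simp only [obs]
  rw [← ENNReal.coe_le_coe, aux]
  simp only [Function.comp_def, ProbabilityMeasure.ennreal_coeFn_eq_coeFn_toMeasure]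
  exact step1

/-- **Mapping theorem for random measures converging in probability.**
Let `S` and `E` be Polish spaces and, for each `N`, let `μN N` be a random
probability measure on `S` converging in probability (in the Lévy–Prokhorov
metric, which metrizes the topology of weak convergence) to a deterministic
probability measure `ν` on `S`. Let `Φ : S → E` be Borel measurable and
continuous at every point of a Borel set `A ⊆ S` with `ν(A) = 1`. Then the
pushforward random measures `μN N ∘ Φ⁻¹` converge in probability to
`ν ∘ Φ⁻¹`. -/
theorem random_measures_mapping_theorem
    {S : Type*} [MetricSpace S] [PolishSpace S] [MeasurableSpace S] [BorelSpace S]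
    {E : Type*} [MetricSpace E] [PolishSpace E] [MeasurableSpace E] [BorelSpace E]
    {Ω : Type*} [MeasurableSpace Ω] (P : Measure Ω) [IsProbabilityMeasure P]
    (μN : ℕ → Ω → Measure S) (hprob : ∀ N ω, IsProbabilityMeasure (μN N ω))
    (ν : Measure S) [IsProbabilityMeasure ν]
    (hconv : ∀ ε : ℝ, 0 < ε →
      Tendsto (fun N => P {ω | ε ≤ levyProkhorovDist (μN N ω) ν})
        atTop (nhds 0))
    (Φ : S → E) (hΦ : Measurable Φ)
    (A : Set S) (hA : MeasurableSet A) (hνA : ν A = 1)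
    (hcont : ∀ x ∈ A, ContinuousAt Φ x) :
    ∀ ε : ℝ, 0 < ε →
      Tendsto (fun N => P {ω | ε ≤ levyProkhorovDist ((μN N ω).map Φ) (ν.map Φ)})
        atTop (nhds 0) := by
  -- package ν as a ProbabilityMeasure
  set νP : ProbabilityMeasure S := ⟨ν, inferInstance⟩ with hνP
  have hAc : (νP : Measure S) Aᶜ = 0 := by
    have := measure_compl hA (measure_ne_top ν A)
    exact (by simpa [hνA] using this : ν Aᶜ = 0)
  -- the pushforward map on the Lévy-Prokhorov metric spaces
  let G : LevyProkhorov (ProbabilityMeasure S) → LevyProkhorov (ProbabilityMeasure E) :=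
    fun μ => (LevyProkhorov.toMeasureEquiv (α := ProbabilityMeasure E)).symm
      (((LevyProkhorov.toMeasureEquiv (α := ProbabilityMeasure S)) μ).map hΦ.aemeasurable)
  let νLP : LevyProkhorov (ProbabilityMeasure S) :=
    (LevyProkhorov.toMeasureEquiv (α := ProbabilityMeasure S)).symm νP
  -- continuity of G at νLP via sequences
  have hCA : ContinuousAt G νLP := by
    rw [ContinuousAt, tendsto_iff_seq_tendsto]
    intro u hu
    -- weak convergence of the underlying measures
    have hweak : Tendsto (fun n => (LevyProkhorov.toMeasureEquiv (α := ProbabilityMeasure S)) (u n))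
        atTop (𝓝 νP) :=
      ((LevyProkhorov.continuous_toMeasure_probabilityMeasure).tendsto νLP).comp hu
    have hmap := aux_mapping_tendsto Φ hΦ A hcont νP hAc _ hweak
    exact ((LevyProkhorov.continuous_ofMeasure_probabilityMeasure).tendsto _).comp hmap
  intro ε hε
  obtain ⟨δ, hδ, himp⟩ := Metric.continuousAt_iff.mp hCA ε hε
  have mono : ∀ N, P {ω | ε ≤ levyProkhorovDist ((μN N ω).map Φ) (ν.map Φ)} ≤
      P {ω | δ ≤ levyProkhorovDist (μN N ω) ν} := by
    intro N
    apply measure_mono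
    intro ω hω
    by_contra hc
    simp only [mem_setOf_eq, not_le] at hc
    have hd : dist ((LevyProkhorov.toMeasureEquiv (α := ProbabilityMeasure S)).symm
        ⟨μN N ω, hprob N ω⟩) νLP < δ := hc
    have := himp hd
    exact absurd hω (not_le.mpr this)
  exact tendsto_of_tendsto_of_tendsto_of_le_of_le tendsto_const_nhds (hconv δ hδ)
    (fun N => zero_le) mono
end
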